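/- arXiv:1601.02269 — 3 statements merged into one kernel-verified Lean document; each statement's English description precedes it below -/
import Mathlib

section
/- Let (W,S,*) be a twisted Coxeter system and let x, y ∈ I_* be twisted involutions. Then the set of involution words of y relative to x equals the union of the sets of reduced words of the atoms of y relative to x; that is, R̂_*(x,y) = ⋃_{w ∈ A_*(x,y)} R(w). Consequently each set R̂_*(x,y) is preserved by the braid relations of (W,S). -/
open CoxeterSystem
open scoped Classical

variable {B W : Type*} [Group W] {M : CoxeterMatrix B}

/-- One step of the twisted conjugation action of the `0`-Hecke monoid on
twisted involutions: `x ⋉ s = (s*)⁻¹ ∘ x ∘ s` where `∘` is the Demazure product. -/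
noncomputable def invStep (cs : CoxeterSystem M W) (σ : W → W) (x : W) (i : B) : W :=
  if cs.length (x * cs.simple i) < cs.length x then x
  else if σ (cs.simple i) * x = x * cs.simple i then x * cs.simple i
  else σ (cs.simple i) * x * cs.simple i

/-- Iterated action `((x ⋉ s₁) ⋉ s₂) ⋉ ⋯ ⋉ sₖ` of a word on a twisted involution. -/
noncomputable def invWord (cs : CoxeterSystem M W) (σ : W → W) (x : W) (l : List B) : W :=
  l.foldl (invStep cs σ) x

/-- The involution words `R̂_*(x, y)` of `y` relative to `x`. -/
noncomputable def InvWords (cs : CoxeterSystem M W) (σ : W → W) (x y : W) : Set (List B) :=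
  {l | invWord cs σ x l = y ∧ ∀ l' : List B, invWord cs σ x l' = y → l.length ≤ l'.length}

/-- The set `R(w)` of reduced words of `w`. -/
def ReducedWords (cs : CoxeterSystem M W) (w : W) : Set (List B) :=
  {l | cs.wordProd l = w ∧ cs.IsReduced l}

/-- The Hecke atoms `B_*(x, y) = {w : x ⋉ w = y}`:  `x ⋉ w` is computed by applying any
reduced word of `w` letter by letter. -/
noncomputable def HeckeAtoms (cs : CoxeterSystem M W) (σ : W → W) (x y : W) : Set W :=
  {w | ∃ l : List B, cs.wordProd l = w ∧ cs.IsReduced l ∧ invWord cs σ x l = y}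

/-- The atoms `A_*(x, y)`: minimal-length elements of `B_*(x, y)`. -/
noncomputable def Atoms (cs : CoxeterSystem M W) (σ : W → W) (x y : W) : Set W :=
  {w ∈ HeckeAtoms cs σ x y | ∀ v ∈ HeckeAtoms cs σ x y, cs.length w ≤ cs.length v}

/-- The twisted involution length `ℓ̂_*(x)`: the common length of words in `R̂_*(1, x)`. -/
noncomputable def hatLength (cs : CoxeterSystem M W) (σ : W → W) (x : W) : ℕ :=
  sInf {k | ∃ l : List B, l.length = k ∧ invWord cs σ 1 l = x}

/-- The Bruhat order on `W`. -/
def BruhatLE (cs : CoxeterSystem M W) : W → W → Prop :=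
  Relation.ReflTransGen
    (fun a b => (∃ t, cs.IsReflection t ∧ b = a * t) ∧ cs.length a < cs.length b)

set_option linter.unusedSectionVars false
set_option linter.unusedVariables false
set_option maxHeartbeats 1000000

namespace IWP

/-- product of `-1` over occurrences of `t` in `L`. -/
noncomputable def sgnOf (L : List W) (t : W) : ℤˣ :=
  (L.map (fun r => if r = t then (-1 : ℤˣ) else 1)).prod

@[simp] lemma sgnOf_nil (t : W) : sgnOf ([] : List W) t = 1 := rfl

lemma sgnOf_cons (a : W) (L : List W) (t : W) :
    sgnOf (a :: L) t = (if a = t then (-1 : ℤˣ) else 1) * sgnOf L t := by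
  simp [sgnOf]

lemma sgnOf_append (L L' : List W) (t : W) :
    sgnOf (L ++ L') t = sgnOf L t * sgnOf L' t := by
  simp [sgnOf]

lemma sgnOf_reverse (L : List W) (t : W) : sgnOf L.reverse t = sgnOf L t := by
  simp [sgnOf, List.prod_reverse]

lemma mem_of_sgnOf_ne_one {L : List W} {t : W} (h : sgnOf L t ≠ 1) : t ∈ L := by
  induction L with
  | nil => simp [sgnOf] at h
  | cons a L ih =>
    rw [sgnOf_cons] at h
    by_cases hat : a = t
    · exact hat ▸ List.mem_cons_self (a := a) (l := L)
    · simp only [hat, if_false, one_mul] at h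
      exact List.mem_cons_of_mem a (ih h)

/-- The sign-representation map for a single generator. -/
noncomputable def pAux (cs : CoxeterSystem M W) (i : B) : W × ℤˣ → W × ℤˣ :=
  fun q => (cs.simple i * q.1 * cs.simple i, if q.1 = cs.simple i then -q.2 else q.2)

lemma pAux_involutive (cs : CoxeterSystem M W) (i : B) : Function.Involutive (pAux cs i) := by
  rintro ⟨t, e⟩
  have hcond : cs.simple i * t * cs.simple i = cs.simple i ↔ t = cs.simple i := by
    constructor
    · intro h
      have := congrArg (fun z => cs.simple i * z * cs.simple i) h
      simpa [mul_assoc, cs.simple_mul_simple_cancel_left, cs.simple_mul_simple_cancel_right] using this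
    · rintro rfl
      simp [cs.simple_mul_simple_self, mul_assoc]
  by_cases h : t = cs.simple i
  · simp [pAux, h, hcond, cs.simple_mul_simple_self, mul_assoc]
  · simp only [pAux, h, if_false, hcond, if_neg h, Prod.mk.injEq]
    refine ⟨?_, trivial⟩
    simp [mul_assoc, cs.simple_mul_simple_cancel_left, cs.simple_mul_simple_self]

/-- The sign representation permutation of a generator. -/
noncomputable def pPerm (cs : CoxeterSystem M W) (i : B) : Equiv.Perm (W × ℤˣ) :=
  (pAux_involutive cs i).toPerm

lemma pPerm_apply (cs : CoxeterSystem M W) (i : B) (t : W) (e : ℤˣ) :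
    pPerm cs i (t, e) = (cs.simple i * t * cs.simple i, if t = cs.simple i then -e else e) := rfl

lemma prod_map_pPerm (cs : CoxeterSystem M W) (ω : List B) (t : W) (e : ℤˣ) :
    (ω.map (pPerm cs)).prod (t, e) =
      (cs.wordProd ω * t * (cs.wordProd ω)⁻¹, sgnOf (cs.rightInvSeq ω) t * e) := by
  induction ω generalizing t e with
  | nil => simp [sgnOf]
  | cons i ω ih =>
    have hris : cs.rightInvSeq (i :: ω)
        = ((cs.wordProd ω)⁻¹ * cs.simple i * cs.wordProd ω) :: cs.rightInvSeq ω := rfl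
    rw [List.map_cons, List.prod_cons, Equiv.Perm.mul_apply, ih, pPerm_apply, hris, sgnOf_cons]
    have hcond : (cs.wordProd ω * t * (cs.wordProd ω)⁻¹ = cs.simple i)
        ↔ ((cs.wordProd ω)⁻¹ * cs.simple i * cs.wordProd ω = t) := by
      constructor
      · intro h; rw [← h]; group
      · intro h; rw [← h]; group
    rw [Prod.mk.injEq]
    constructor
    · rw [cs.wordProd_cons, mul_inv_rev, cs.inv_simple]
      group
    · by_cases h : cs.wordProd ω * t * (cs.wordProd ω)⁻¹ = cs.simple i
      · simp only [h, if_true, hcond.mp h, if_pos, neg_one_mul, neg_mul, one_mul]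
      · simp only [h, if_false, if_neg (fun hh => h (hcond.mpr hh)), one_mul]

end IWP

namespace IWP

variable (cs : CoxeterSystem M W)

/-- `[i, j, i, j, ...]` of length `2 * m`. -/
def lamWord (i j : B) : ℕ → List B
  | 0 => []
  | m + 1 => i :: j :: lamWord i j m

/-- `[..., j, i]`: the reverse of `lamWord i j m`, i.e. `[j, i, j, i, ...]` of length `2*m`. -/
def gamWord (j i : B) : ℕ → List B
  | 0 => []
  | m + 1 => j :: i :: gamWord j i m

lemma gamWord_append (j i : B) (m : ℕ) :
    gamWord j i m ++ [j, i] = gamWord j i (m + 1) := by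
  induction m with
  | zero => rfl
  | succ m ih =>
    show (j :: i :: gamWord j i m) ++ [j, i] = _
    rw [List.cons_append, List.cons_append, ih]
    rfl

lemma lamWord_reverse (i j : B) (m : ℕ) :
    (lamWord i j m).reverse = gamWord j i m := by
  induction m with
  | zero => rfl
  | succ m ih =>
    show (i :: j :: lamWord i j m).reverse = _
    rw [List.reverse_cons, List.reverse_cons, ih, List.append_assoc]
    simpa using gamWord_append j i m

lemma wordProd_lamWord (i j : B) (m : ℕ) :
    cs.wordProd (lamWord i j m) = (cs.simple i * cs.simple j) ^ m := by
  induction m with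
  | zero => simp [lamWord]
  | succ m ih =>
    show cs.wordProd (i :: j :: lamWord i j m) = _
    rw [cs.wordProd_cons, cs.wordProd_cons, ih, pow_succ']
    group

lemma prod_map_pPerm_lamWord (i j : B) (m : ℕ) :
    ((lamWord i j m).map (pPerm cs)).prod = (pPerm cs i * pPerm cs j) ^ m := by
  induction m with
  | zero => rfl
  | succ m ih =>
    show (List.map (pPerm cs) (i :: j :: lamWord i j m)).prod = _
    rw [List.map_cons, List.map_cons, List.prod_cons, List.prod_cons, ih, pow_succ']
    group

lemma leftInvSeq_gamWord (j i : B) (m : ℕ) :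
    cs.leftInvSeq (gamWord j i m)
      = (List.range (2 * m)).map
          (fun k => (cs.simple j * cs.simple i) ^ k * cs.simple j) := by
  induction m with
  | zero => rfl
  | succ m ih =>
    have h1 : cs.leftInvSeq (gamWord j i (m + 1))
        = cs.simple j :: (cs.simple i :: (cs.leftInvSeq (gamWord j i m)).map
            (MulAut.conj (cs.simple i))).map (MulAut.conj (cs.simple j)) := rfl
    have h2 : 2 * (m + 1) = (2 * m) + 1 + 1 := by ring
    rw [h1, ih, h2, List.range_succ_eq_map, List.range_succ_eq_map]
    simp only [List.map_cons, List.map_map]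
    congr 1
    · simp
    congr 1
    · simp only [Function.comp_apply, MulAut.conj_apply, cs.inv_simple, Nat.succ_eq_add_one]
      rw [pow_succ, pow_zero, one_mul]
    · apply List.map_congr_left
      intro k _
      simp only [Function.comp_apply, MulAut.conj_apply, cs.inv_simple, Nat.succ_eq_add_one]
      show cs.simple j * (cs.simple i * ((cs.simple j * cs.simple i) ^ k * cs.simple j)
          * cs.simple i) * cs.simple j = (cs.simple j * cs.simple i) ^ (k + 1 + 1) * cs.simple j
      rw [pow_succ, pow_succ]
      have hc : (cs.simple j * cs.simple i) * (cs.simple j * cs.simple i) ^ k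
          = (cs.simple j * cs.simple i) ^ k * (cs.simple j * cs.simple i) := by
        rw [← pow_succ', pow_succ]
      simp only [← mul_assoc]
      rw [hc]
      simp only [← mul_assoc]

end IWP

namespace IWP

variable (cs : CoxeterSystem M W)

lemma sgnOf_ris_lamWord (i j : B) (t : W) :
    sgnOf (cs.rightInvSeq (lamWord i j (M i j))) t = 1 := by
  have hrev : (gamWord j i (M i j)).reverse = lamWord i j (M i j) := by
    rw [← lamWord_reverse, List.reverse_reverse]
  have h1 : cs.rightInvSeq (lamWord i j (M i j))
      = (cs.leftInvSeq (gamWord j i (M i j))).reverse := by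
    rw [← hrev, cs.rightInvSeq_reverse]
  rw [h1, sgnOf_reverse, leftInvSeq_gamWord]
  set P := cs.simple j * cs.simple i with hP
  have hPm : P ^ (M i j) = 1 := cs.simple_mul_simple_pow' i j
  rw [two_mul, List.range_add, List.map_append, sgnOf_append]
  have h2 : List.map (fun k => P ^ k * cs.simple j)
        (List.map (fun x => M i j + x) (List.range (M i j)))
      = List.map (fun k => P ^ k * cs.simple j) (List.range (M i j)) := by
    rw [List.map_map]
    apply List.map_congr_left
    intro k _
    simp only [Function.comp_apply]
    rw [pow_add, hPm, one_mul]
  rw [h2, Int.units_mul_self]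

lemma pPerm_liftable : M.IsLiftable (pPerm cs) := by
  intro i j
  rw [← prod_map_pPerm_lamWord]
  apply Equiv.ext
  rintro ⟨t, e⟩
  rw [prod_map_pPerm, wordProd_lamWord, cs.simple_mul_simple_pow i j, sgnOf_ris_lamWord]
  simp

/-- The sign representation of the Coxeter group. -/
noncomputable def phi : W →* Equiv.Perm (W × ℤˣ) :=
  cs.lift ⟨pPerm cs, pPerm_liftable cs⟩

lemma phi_simple (i : B) : phi cs (cs.simple i) = pPerm cs i :=
  cs.lift_apply_simple (pPerm_liftable cs) i

lemma phi_wordProd (ω : List B) : phi cs (cs.wordProd ω) = (ω.map (pPerm cs)).prod := by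
  unfold CoxeterSystem.wordProd
  rw [map_list_prod]
  congr 1
  rw [List.map_map]
  apply List.map_congr_left
  intro k _
  exact phi_simple cs k

lemma phi_apply_of_wordProd {w : W} {ω : List B} (hω : cs.wordProd ω = w) (t : W) (e : ℤˣ) :
    phi cs w (t, e) = (w * t * w⁻¹, sgnOf (cs.rightInvSeq ω) t * e) := by
  rw [← hω, phi_wordProd, prod_map_pPerm]

/-- The sign of a reflection relative to `w`. -/
noncomputable def nsgn (w t : W) : ℤˣ := (phi cs w (t, 1)).2

lemma nsgn_eq_sgnOf_ris {w : W} {ω : List B} (hω : cs.wordProd ω = w) (t : W) :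
    nsgn cs w t = sgnOf (cs.rightInvSeq ω) t := by
  rw [nsgn, phi_apply_of_wordProd cs hω, mul_one]

lemma phi_apply (w t : W) (e : ℤˣ) :
    phi cs w (t, e) = (w * t * w⁻¹, nsgn cs w t * e) := by
  obtain ⟨ω, rfl⟩ := cs.wordProd_surjective w
  rw [phi_apply_of_wordProd cs rfl, nsgn_eq_sgnOf_ris cs rfl]

lemma length_mul_lt_of_nsgn_neg {w t : W} (h : nsgn cs w t = -1) :
    cs.length (w * t) < cs.length w := by
  obtain ⟨ω, hred, rfl⟩ := cs.exists_reduced_word' w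
  have hmem : t ∈ cs.rightInvSeq ω := by
    apply mem_of_sgnOf_ne_one
    rw [← nsgn_eq_sgnOf_ris cs rfl, h]
    decide
  exact (cs.isRightInversion_of_mem_rightInvSeq hred hmem).2

lemma nsgn_refl_self {t : W} (ht : cs.IsReflection t) : nsgn cs t t = -1 := by
  obtain ⟨u, i, rfl⟩ := ht
  set t := u * cs.simple i * u⁻¹ with hti
  have h1 : phi cs u⁻¹ (t, 1) = (cs.simple i, nsgn cs u⁻¹ t) := by
    rw [phi_apply, mul_one]
    congr 1
    rw [hti]; group
  have h2 : phi cs u (cs.simple i, nsgn cs u⁻¹ t) = (t, 1) := by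
    have : phi cs u (phi cs u⁻¹ (t, 1)) = (t, 1) := by
      rw [← Equiv.Perm.mul_apply, ← map_mul, mul_inv_cancel, map_one, Equiv.Perm.one_apply]
    rwa [h1] at this
  have h3 : phi cs u (cs.simple i, -(nsgn cs u⁻¹ t)) = (t, -1) := by
    rw [phi_apply] at h2 ⊢
    rw [Prod.mk.injEq] at h2
    rw [h2.1, Prod.mk.injEq]
    refine ⟨rfl, ?_⟩
    rw [mul_neg, h2.2]
  have h4 : phi cs t (t, 1) = (t, -1) := by
    have : phi cs t = phi cs u * phi cs (cs.simple i) * phi cs u⁻¹ := by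
      rw [← map_mul, ← map_mul]
    rw [this, Equiv.Perm.mul_apply, Equiv.Perm.mul_apply, h1, phi_simple, pPerm_apply,
      if_pos rfl, cs.simple_mul_simple_self, one_mul]
    exact h3
  rw [nsgn, h4]

end IWP

namespace IWP

variable (cs : CoxeterSystem M W)

lemma nsgn_neg_of_length_mul_lt {w t : W} (ht : cs.IsReflection t)
    (h : cs.length (w * t) < cs.length w) : nsgn cs w t = -1 := by
  rcases Int.units_eq_one_or (nsgn cs w t) with h1 | h1
  · exfalso
    have hwt : nsgn cs (w * t) t = -1 := by
      have : phi cs (w * t) (t, 1) = phi cs w (phi cs t (t, 1)) := by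
        rw [← Equiv.Perm.mul_apply, ← map_mul]
      rw [nsgn, this]
      have htt : phi cs t (t, 1) = (t, -1) := by
        rw [phi_apply, nsgn_refl_self cs ht]
        congr 1
        rw [ht.inv]
        rw [ht.mul_self, one_mul]
      rw [htt, phi_apply, h1]
      simp
    have := length_mul_lt_of_nsgn_neg cs hwt
    rw [mul_assoc, ht.mul_self, mul_one] at this
    omega
  · exact h1

/-- Strong exchange property. -/
lemma strongExchange {w t : W} (ht : cs.IsReflection t)
    (h : cs.length (w * t) < cs.length w) {ω : List B} (hω : cs.wordProd ω = w) :
    t ∈ cs.rightInvSeq ω := by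
  apply mem_of_sgnOf_ne_one
  rw [← nsgn_eq_sgnOf_ris cs hω, nsgn_neg_of_length_mul_lt cs ht h]
  decide

/-- Strong exchange property, deletion form. -/
lemma exchange_delete {w t : W} (ht : cs.IsReflection t)
    (h : cs.length (w * t) < cs.length w) {ω : List B} (hω : cs.wordProd ω = w) :
    ∃ k < ω.length, w * t = cs.wordProd (ω.eraseIdx k) := by
  have hmem := strongExchange cs ht h hω
  obtain ⟨k, hk, hkt⟩ := List.mem_iff_getElem.mp hmem
  rw [cs.length_rightInvSeq] at hk
  refine ⟨k, hk, ?_⟩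
  rw [← hω, ← cs.wordProd_mul_getD_rightInvSeq ω k]
  congr 1
  rw [List.getD_eq_getElem _ _ (by rwa [cs.length_rightInvSeq]), hkt]

end IWP

namespace IWP

variable (cs : CoxeterSystem M W)

/-- Key dihedral-type lemma: if `ℓ(s_a u) > ℓ(u) < ℓ(u s_b)` and `ℓ(s_a u s_b) ≤ ℓ(u)`,
then `s_a u s_b = u`. -/
lemma key_lemma (u : W) (a b : B)
    (h1 : cs.length (cs.simple a * u) = cs.length u + 1)
    (h2 : cs.length (u * cs.simple b) = cs.length u + 1)
    (h3 : cs.length (cs.simple a * u * cs.simple b) ≤ cs.length u) :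
    cs.simple a * u * cs.simple b = u := by
  obtain ⟨ω, hred, rfl⟩ := cs.exists_reduced_word' u
  set u := cs.wordProd ω
  have hword : cs.wordProd (b :: ω.reverse) = cs.simple b * u⁻¹ := by
    rw [cs.wordProd_cons, cs.wordProd_reverse]
  have hlc : cs.length (cs.simple b * u⁻¹) = cs.length u + 1 := by
    have : (cs.simple b * u⁻¹)⁻¹ = u * cs.simple b := by
      rw [mul_inv_rev, inv_inv, cs.inv_simple]
    rw [← cs.length_inv, this, h2]
  have hlen : cs.length ((cs.simple b * u⁻¹) * cs.simple a) < cs.length (cs.simple b * u⁻¹) := by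
    have : ((cs.simple b * u⁻¹) * cs.simple a)⁻¹ = cs.simple a * u * cs.simple b := by
      rw [mul_inv_rev, mul_inv_rev, inv_inv, cs.inv_simple, cs.inv_simple, mul_assoc]
    rw [← cs.length_inv, this, hlc]
    omega
  obtain ⟨k, hk, hdel⟩ := exchange_delete cs (cs.isReflection_simple a) hlen hword
  match k with
  | 0 =>
    rw [List.eraseIdx_cons_zero, cs.wordProd_reverse] at hdel
    -- s_b u⁻¹ s_a = u⁻¹
    have := congrArg (fun z => z⁻¹) hdel
    simp only [mul_inv_rev, inv_inv, cs.inv_simple] at this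
    rw [← mul_assoc] at this
    exact this
  | (k' + 1) =>
    exfalso
    rw [List.eraseIdx_cons_succ, cs.wordProd_cons] at hdel
    have heq : u⁻¹ * cs.simple a = cs.wordProd (ω.reverse.eraseIdx k') := by
      have := congrArg (fun z => cs.simple b * z) hdel
      simpa only [← mul_assoc, cs.simple_mul_simple_cancel_left] using this
    have hlen2 : cs.length (u⁻¹ * cs.simple a) ≤ cs.length u - 1 := by
      rw [heq]
      calc cs.length (cs.wordProd (ω.reverse.eraseIdx k'))
          ≤ (ω.reverse.eraseIdx k').length := cs.length_wordProd_le _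
        _ ≤ ω.reverse.length - 1 := by
            have hk' : k' < ω.reverse.length := by
              simp only [List.length_cons] at hk
              omega
            rw [List.length_eraseIdx, if_pos hk']
        _ = cs.length u - 1 := by rw [List.length_reverse, hred]
    have hlen3 : cs.length (u⁻¹ * cs.simple a) = cs.length u + 1 := by
      have : (u⁻¹ * cs.simple a)⁻¹ = cs.simple a * u := by
        rw [mul_inv_rev, inv_inv, cs.inv_simple]
      rw [← cs.length_inv, this, h1]
    omega

section Bruhat

lemma ble_refl (w : W) : BruhatLE cs w w := Relation.ReflTransGen.refl

lemma ble_trans {u v w : W} (h1 : BruhatLE cs u v) (h2 : BruhatLE cs v w) :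
    BruhatLE cs u w := Relation.ReflTransGen.trans h1 h2

lemma ble_of_step {u : W} {t : W} (ht : cs.IsReflection t)
    (h : cs.length u < cs.length (u * t)) : BruhatLE cs u (u * t) :=
  Relation.ReflTransGen.single ⟨⟨t, ht, rfl⟩, h⟩

lemma ble_of_step' {u : W} {t : W} (ht : cs.IsReflection t)
    (h : cs.length (u * t) < cs.length u) : BruhatLE cs (u * t) u := by
  have : u = (u * t) * t := by rw [mul_assoc, ht.mul_self, mul_one]
  nth_rw 2 [this]
  apply ble_of_step cs ht
  rw [← this]
  exact h

lemma ble_length_le {u w : W} (h : BruhatLE cs u w) : cs.length u ≤ cs.length w := by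
  induction h with
  | refl => exact le_rfl
  | tail _ hstep ih => exact ih.trans (le_of_lt hstep.2)

lemma eq_of_ble_of_length_ge {u w : W} (h : BruhatLE cs u w)
    (hl : cs.length w ≤ cs.length u) : u = w := by
  rcases Relation.ReflTransGen.cases_tail h with rfl | ⟨v, huv, hstep⟩
  · rfl
  · have := ble_length_le cs huv
    omega

lemma ble_antisymm {u w : W} (h : BruhatLE cs u w) (h' : BruhatLE cs w u) : u = w :=
  eq_of_ble_of_length_ge cs h (ble_length_le cs h')

/-- parity: elements related by a Bruhat step have lengths of different parity -/
lemma step_length_parity {v w : W} (t : W) (ht : cs.IsReflection t) (hw : w = v * t) :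
    cs.length w % 2 ≠ cs.length v % 2 := by
  subst hw
  rw [cs.length_mul_mod_two]
  obtain ⟨k, hk⟩ := ht.odd_length
  omega

end Bruhat

end IWP

namespace IWP

variable (cs : CoxeterSystem M W)

lemma refl_conj_simple {t : W} (ht : cs.IsReflection t) (i : B) :
    cs.IsReflection (cs.simple i * t * cs.simple i) := by
  have := ht.conj (cs.simple i)
  rwa [cs.inv_simple] at this

lemma step_eq_aux {v t : W} (i : B) :
    (v * t) * cs.simple i = (v * cs.simple i) * (cs.simple i * t * cs.simple i) := by
  simp [mul_assoc, cs.simple_mul_simple_cancel_left]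

/-- Coatom exchange: if `w = v t` with `ℓ(v) + 1 = ℓ(w)`, `i` is a right descent of `w`
but a right ascent of `v`, then `v = w s_i`. -/
lemma coatom_eq {w v t : W} (ht : cs.IsReflection t) (hw : w = v * t)
    (hv : cs.length v + 1 = cs.length w) {i : B}
    (hdesc : cs.length (w * cs.simple i) + 1 = cs.length w)
    (hvs : cs.length (v * cs.simple i) = cs.length v + 1) :
    v = w * cs.simple i := by
  obtain ⟨ω₀, hred₀, hω₀⟩ := cs.exists_reduced_word' (w * cs.simple i)
  have hπ : cs.wordProd (ω₀ ++ [i]) = w := by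
    rw [cs.wordProd_append, cs.wordProd_singleton, ← hω₀, cs.simple_mul_simple_cancel_right]
  have hlenω₀ : ω₀.length = cs.length (w * cs.simple i) := by
    rw [hω₀]; exact hred₀.symm
  have hwtv : w * t = v := by rw [hw, mul_assoc, ht.mul_self, mul_one]
  have hwt : cs.length (w * t) < cs.length w := by rw [hwtv]; omega
  obtain ⟨k, hk, hdel⟩ := exchange_delete cs ht hwt hπ
  rcases lt_trichotomy k ω₀.length with hlt | heq | hgt
  · exfalso
    rw [List.eraseIdx_append_of_lt_length hlt, cs.wordProd_append, cs.wordProd_singleton,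
      hwtv] at hdel
    have : v * cs.simple i = cs.wordProd (ω₀.eraseIdx k) := by
      rw [hdel, cs.simple_mul_simple_cancel_right]
    have hle : cs.length (v * cs.simple i) ≤ ω₀.length - 1 := by
      rw [this]
      calc cs.length (cs.wordProd (ω₀.eraseIdx k)) ≤ (ω₀.eraseIdx k).length :=
            cs.length_wordProd_le _
        _ ≤ ω₀.length - 1 := by rw [List.length_eraseIdx, if_pos hlt]
    omega
  · rw [heq] at hdel
    have : (ω₀ ++ [i]).eraseIdx ω₀.length = ω₀ := by
      rw [List.eraseIdx_eq_take_drop_succ, List.take_left]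
      rw [List.drop_of_length_le (by simp), List.append_nil]
    rw [this, ← hω₀, hwtv] at hdel
    exact hdel
  · exfalso
    simp only [List.length_append, List.length_singleton] at hk
    omega

lemma parity_gap {w v t : W} (ht : cs.IsReflection t) (hw : w = v * t)
    (hlt : cs.length v < cs.length w) (hne : cs.length v + 1 ≠ cs.length w) :
    cs.length v + 3 ≤ cs.length w := by
  have := step_length_parity cs t ht hw
  omega

/-- Joint monotonicity / lifting lemmas for the Bruhat order. -/
lemma mono_liftA : ∀ n : ℕ, ∀ w : W, cs.length w ≤ n →
    (∀ u i, BruhatLE cs u w → cs.length (u * cs.simple i) = cs.length u + 1 →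
      cs.length (w * cs.simple i) = cs.length w + 1 →
      BruhatLE cs (u * cs.simple i) (w * cs.simple i))
  ∧ (∀ u i, BruhatLE cs u w → cs.length (u * cs.simple i) = cs.length u + 1 →
      cs.length (w * cs.simple i) + 1 = cs.length w → BruhatLE cs (u * cs.simple i) w) := by
  intro n
  induction n with
  | zero =>
    intro w hw
    constructor
    · intro u i hble hu hws
      have : u = w := eq_of_ble_of_length_ge cs hble (by omega)
      rw [this]
      exact ble_refl cs _
    · intro u i hble hu hws
      omega
  | succ n ih =>
    intro w hw
    constructor
    · -- MONO
      intro u i hble hu hws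
      rcases Relation.ReflTransGen.cases_tail hble with rfl | ⟨v, huv, hstep⟩
      · exact ble_refl cs _
      · obtain ⟨⟨t, ht, hwt⟩, hlen⟩ := hstep
        have hvn : cs.length v ≤ n := by omega
        rcases cs.length_mul_simple v i with hvs | hvs
        · -- ascent at v : use MONO at v, then step (v s_i) → (w s_i)
          have h1 : BruhatLE cs (u * cs.simple i) (v * cs.simple i) :=
            (ih v hvn).1 u i huv hu hvs
          refine h1.tail ⟨⟨cs.simple i * t * cs.simple i, refl_conj_simple cs ht i, ?_⟩, ?_⟩
          · rw [hwt]; exact step_eq_aux cs i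
          · omega
        · -- descent at v : use LIFT-A at v
          have h1 : BruhatLE cs (u * cs.simple i) v :=
            (ih v hvn).2 u i huv hu hvs
          have h2 : BruhatLE cs v w := Relation.ReflTransGen.single ⟨⟨t, ht, hwt⟩, hlen⟩
          have h3 : BruhatLE cs w (w * cs.simple i) :=
            ble_of_step cs (cs.isReflection_simple i) (by omega)
          exact (h1.trans h2).trans h3
    · -- LIFT-A
      intro u i hble hu hws
      rcases Relation.ReflTransGen.cases_tail hble with rfl | ⟨v, huv, hstep⟩
      · omega
      · obtain ⟨⟨t, ht, hwt⟩, hlen⟩ := hstep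
        have hvn : cs.length v ≤ n := by omega
        rcases cs.length_mul_simple v i with hvs | hvs
        · -- ascent at v : use MONO at v
          have h1 : BruhatLE cs (u * cs.simple i) (v * cs.simple i) :=
            (ih v hvn).1 u i huv hu hvs
          by_cases hco : cs.length v + 1 = cs.length w
          · -- coatom case : v = w s_i
            have : v = w * cs.simple i := coatom_eq cs ht hwt hco hws hvs
            have hvsw : v * cs.simple i = w := by
              rw [this, cs.simple_mul_simple_cancel_right]
            rwa [hvsw] at h1
          · -- gap case
            have hgap := parity_gap cs ht hwt hlen hco
            have h2 : BruhatLE cs (v * cs.simple i) (w * cs.simple i) := by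
              refine Relation.ReflTransGen.single ⟨⟨cs.simple i * t * cs.simple i,
                refl_conj_simple cs ht i, ?_⟩, ?_⟩
              · rw [hwt]; exact step_eq_aux cs i
              · omega
            have h3 : BruhatLE cs (w * cs.simple i) w :=
              ble_of_step' cs (cs.isReflection_simple i) (by omega)
            exact (h1.trans h2).trans h3
        · -- descent at v : LIFT-A at v
          have h1 : BruhatLE cs (u * cs.simple i) v :=
            (ih v hvn).2 u i huv hu hvs
          exact h1.tail ⟨⟨t, ht, hwt⟩, hlen⟩

lemma ble_mono {u w : W} (i : B) (h : BruhatLE cs u w)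
    (hu : cs.length (u * cs.simple i) = cs.length u + 1)
    (hw : cs.length (w * cs.simple i) = cs.length w + 1) :
    BruhatLE cs (u * cs.simple i) (w * cs.simple i) :=
  (mono_liftA cs (cs.length w) w le_rfl).1 u i h hu hw

lemma ble_liftA {u w : W} (i : B) (h : BruhatLE cs u w)
    (hu : cs.length (u * cs.simple i) = cs.length u + 1)
    (hw : cs.length (w * cs.simple i) + 1 = cs.length w) :
    BruhatLE cs (u * cs.simple i) w :=
  (mono_liftA cs (cs.length w) w le_rfl).2 u i h hu hw

/-- Lifting, downward direction. -/
lemma ble_liftC : ∀ n : ℕ, ∀ w : W, cs.length w ≤ n → ∀ u (i : B), BruhatLE cs u w →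
    cs.length (w * cs.simple i) + 1 = cs.length w →
    BruhatLE cs u (w * cs.simple i) ∨ BruhatLE cs (u * cs.simple i) (w * cs.simple i) := by
  intro n
  induction n with
  | zero =>
    intro w hw u i hble hws
    omega
  | succ n ih =>
    intro w hw u i hble hws
    rcases Relation.ReflTransGen.cases_tail hble with rfl | ⟨v, huv, hstep⟩
    · right; exact ble_refl cs _
    · obtain ⟨⟨t, ht, hwt⟩, hlen⟩ := hstep
      have hvn : cs.length v ≤ n := by omega
      rcases cs.length_mul_simple v i with hvs | hvs
      · -- ascent at v
        by_cases hco : cs.length v + 1 = cs.length w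
        · -- coatom : v = w s_i
          left
          have : v = w * cs.simple i := coatom_eq cs ht hwt hco hws hvs
          rwa [← this]
        · -- gap : u ≤ v ≤ v s_i ≤ w s_i
          left
          have hgap := parity_gap cs ht hwt hlen hco
          have h1 : BruhatLE cs v (v * cs.simple i) :=
            ble_of_step cs (cs.isReflection_simple i) (by omega)
          have h2 : BruhatLE cs (v * cs.simple i) (w * cs.simple i) := by
            refine Relation.ReflTransGen.single ⟨⟨cs.simple i * t * cs.simple i,
              refl_conj_simple cs ht i, ?_⟩, ?_⟩
            · rw [hwt]; exact step_eq_aux cs i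
            · omega
          exact (huv.trans h1).trans h2
      · -- descent at v : IH at v, then (v s_i) ≤ (w s_i)
        have h2 : BruhatLE cs (v * cs.simple i) (w * cs.simple i) := by
          by_cases hco : cs.length v + 1 = cs.length w
          · -- v s_i and w s_i : step? ℓ(v s_i) = ℓ v - 1 = ℓ w - 2 < ℓ(w s_i) = ℓ w - 1 ✓
            refine Relation.ReflTransGen.single ⟨⟨cs.simple i * t * cs.simple i,
              refl_conj_simple cs ht i, ?_⟩, ?_⟩
            · rw [hwt]; exact step_eq_aux cs i
            · omega
          · have hgap := parity_gap cs ht hwt hlen hco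
            refine Relation.ReflTransGen.single ⟨⟨cs.simple i * t * cs.simple i,
              refl_conj_simple cs ht i, ?_⟩, ?_⟩
            · rw [hwt]; exact step_eq_aux cs i
            · omega
        rcases ih v hvn u i huv hvs with h1 | h1
        · left; exact h1.trans h2
        · right; exact h1.trans h2

lemma ble_liftC' {u w : W} (i : B) (h : BruhatLE cs u w)
    (hw : cs.length (w * cs.simple i) + 1 = cs.length w) :
    BruhatLE cs u (w * cs.simple i) ∨ BruhatLE cs (u * cs.simple i) (w * cs.simple i) :=
  ble_liftC cs (cs.length w) w le_rfl u i h hw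

end IWP

namespace IWP

variable (cs : CoxeterSystem M W)

/-- One step of the 0-Hecke (Demazure) right action. -/
noncomputable def rstep (z : W) (i : B) : W :=
  if cs.length (z * cs.simple i) = cs.length z + 1 then z * cs.simple i else z

/-- Iterated Demazure right action of a word. -/
noncomputable def dfold (x : W) (l : List B) : W := l.foldl (rstep cs) x

@[simp] lemma dfold_nil (x : W) : dfold cs x [] = x := rfl

lemma dfold_append (x : W) (l l' : List B) :
    dfold cs x (l ++ l') = dfold cs (dfold cs x l) l' := List.foldl_append

lemma dfold_concat (x : W) (l : List B) (i : B) :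
    dfold cs x (l ++ [i]) = rstep cs (dfold cs x l) i := by
  rw [dfold_append]; rfl

lemma rstep_cases (z : W) (i : B) :
    (cs.length (z * cs.simple i) = cs.length z + 1 ∧ rstep cs z i = z * cs.simple i) ∨
    (cs.length (z * cs.simple i) + 1 = cs.length z ∧ rstep cs z i = z) := by
  rcases cs.length_mul_simple z i with h | h
  · left; exact ⟨h, if_pos h⟩
  · right
    refine ⟨h, if_neg ?_⟩
    omega

lemma rstep_descent (z : W) (i : B) :
    cs.length ((rstep cs z i) * cs.simple i) + 1 = cs.length (rstep cs z i) := by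
  rcases rstep_cases cs z i with ⟨h, he⟩ | ⟨h, he⟩ <;> rw [he]
  · rw [cs.simple_mul_simple_cancel_right]; omega
  · omega

lemma rstep_idem (z : W) (i : B) : rstep cs (rstep cs z i) i = rstep cs z i := by
  have := rstep_descent cs z i
  rcases rstep_cases cs (rstep cs z i) i with ⟨h, he⟩ | ⟨h, he⟩ <;> rw [he]
  omega

lemma ble_rstep_self (z : W) (i : B) : BruhatLE cs z (rstep cs z i) := by
  rcases rstep_cases cs z i with ⟨h, he⟩ | ⟨h, he⟩ <;> rw [he]
  · exact ble_of_step cs (cs.isReflection_simple i) (by omega)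
  · exact ble_refl cs z

/-- "L3": multiplying below, against a Demazure step. -/
lemma ble_mul_rstep {a b : W} (i : B) (h : BruhatLE cs a b) :
    BruhatLE cs (a * cs.simple i) (rstep cs b i) := by
  rcases rstep_cases cs b i with ⟨hb, he⟩ | ⟨hb, he⟩ <;> rw [he] <;>
    rcases cs.length_mul_simple a i with ha | ha
  · exact ble_mono cs i h ha hb
  · exact ble_trans cs (ble_of_step' cs (cs.isReflection_simple i) (by omega))
      (ble_trans cs h (ble_of_step cs (cs.isReflection_simple i) (by omega)))
  · exact ble_liftA cs i h ha hb
  · exact ble_trans cs (ble_of_step' cs (cs.isReflection_simple i) (by omega)) h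

/-- The fundamental property of the Demazure fold on reduced words:
`dfold x l` is the Bruhat-maximum of `x * [1,w]`. -/
lemma dem_spec : ∀ n (w : W), cs.length w ≤ n → ∀ (x : W) (l : List B),
    cs.IsReduced l → cs.wordProd l = w →
    (∃ u, BruhatLE cs u w ∧ x * u = dfold cs x l) ∧
    (∀ u, BruhatLE cs u w → BruhatLE cs (x * u) (dfold cs x l)) := by
  intro n
  induction n with
  | zero =>
    intro w hw x l hred hπ
    have hw1 : w = 1 := cs.length_eq_zero_iff.mp (Nat.le_zero.mp hw)
    have hl : l = [] := by
      have : l.length = 0 := by rw [← hred, hπ, hw1, cs.length_one]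
      exact List.length_eq_zero_iff.mp this
    subst hl hw1
    constructor
    · exact ⟨1, ble_refl cs 1, mul_one x⟩
    · intro u hu
      have : u = 1 := eq_of_ble_of_length_ge cs hu (by simp)
      rw [this, mul_one]
      exact ble_refl cs x
  | succ n ih =>
    intro w hw x l hred hπ
    rcases Nat.eq_zero_or_pos (cs.length w) with hw0 | hwpos
    · exact ih w (by omega) x l hred hπ
    have hlne : l ≠ [] := by
      intro h
      rw [h] at hπ
      rw [← hπ, cs.wordProd_nil, cs.length_one] at hwpos
      omega
    rcases List.eq_nil_or_concat l with rfl | ⟨l₀, i, rfl⟩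
    · exact absurd rfl hlne
    rw [List.concat_eq_append] at hred hπ ⊢
    have hl₀ : cs.IsReduced l₀ := by
      have := hred.take l₀.length
      rwa [List.take_left] at this
    set w₀ := cs.wordProd l₀ with hw₀
    have hπ₀ : w₀ * cs.simple i = w := by rw [← hπ, cs.wordProd_append, cs.wordProd_singleton]
    have hlen₀ : cs.length w₀ = l₀.length := hl₀.symm ▸ rfl
    have hlenw : cs.length w = l₀.length + 1 := by
      rw [← hπ]
      have : cs.IsReduced (l₀ ++ [i]) := hred
      rw [this]
      simp
    have hdesc : cs.length (w * cs.simple i) + 1 = cs.length w := by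
      have : w * cs.simple i = w₀ := by rw [← hπ₀, cs.simple_mul_simple_cancel_right]
      rw [this]
      omega
    have hasc₀ : cs.length (w₀ * cs.simple i) = cs.length w₀ + 1 := by
      rw [hπ₀]; omega
    have IH := ih w₀ (by omega) x l₀ hl₀ rfl
    have hfold : dfold cs x (l₀ ++ [i]) = rstep cs (dfold cs x l₀) i := dfold_concat cs x l₀ i
    constructor
    · obtain ⟨u₀, hu₀, hxu₀⟩ := IH.1
      rcases rstep_cases cs (dfold cs x l₀) i with ⟨h, he⟩ | ⟨h, he⟩
      · refine ⟨u₀ * cs.simple i, ?_, ?_⟩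
        · -- LIFT-B
          rcases cs.length_mul_simple u₀ i with hu | hu
          · rw [← hπ₀]
            exact ble_mono cs i hu₀ hu hasc₀
          · refine ble_trans cs (ble_of_step' cs (cs.isReflection_simple i) (by omega)) ?_
            refine ble_trans cs hu₀ ?_
            rw [← hπ₀]
            exact ble_of_step cs (cs.isReflection_simple i) (by omega)
        · rw [hfold, he, ← hxu₀, mul_assoc]
      · refine ⟨u₀, ?_, ?_⟩
        · refine ble_trans cs hu₀ ?_
          rw [← hπ₀]
          exact ble_of_step cs (cs.isReflection_simple i) (by omega)
        · rw [hfold, he, hxu₀]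
    · intro u hu
      rw [hfold]
      have hw₀eq : w * cs.simple i = w₀ := by rw [← hπ₀, cs.simple_mul_simple_cancel_right]
      rcases ble_liftC' cs i hu hdesc with h1 | h1
      · rw [hw₀eq] at h1
        exact ble_trans cs (IH.2 u h1) (ble_rstep_self cs _ i)
      · rw [hw₀eq] at h1
        have h2 := IH.2 (u * cs.simple i) h1
        have h3 := ble_mul_rstep cs i h2
        rwa [← mul_assoc, mul_assoc, cs.simple_mul_simple_self, mul_one] at h3

/-- Braid invariance of the Demazure fold. -/
lemma dfold_eq_of_reduced {l l' : List B} (hl : cs.IsReduced l) (hl' : cs.IsReduced l')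
    (h : cs.wordProd l = cs.wordProd l') (x : W) : dfold cs x l = dfold cs x l' := by
  set w := cs.wordProd l with hw
  have S1 := dem_spec cs (cs.length w) w le_rfl x l hl rfl
  have S2 := dem_spec cs (cs.length w) w le_rfl x l' hl' h.symm
  obtain ⟨u1, hu1, hx1⟩ := S1.1
  obtain ⟨u2, hu2, hx2⟩ := S2.1
  apply ble_antisymm cs
  · rw [← hx1]; exact S2.2 u1 hu1
  · rw [← hx2]; exact S1.2 u2 hu2

lemma length_dfold_le (x : W) (l : List B) :
    cs.length (dfold cs x l) ≤ cs.length x + l.length := by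
  induction l using List.reverseRecOn with
  | nil => simp
  | append_singleton l i ihl =>
    rw [dfold_concat]
    rcases rstep_cases cs (dfold cs x l) i with ⟨h, he⟩ | ⟨h, he⟩ <;> rw [he] <;>
      simp only [List.length_append, List.length_singleton] <;> omega

lemma dfold_one_reduced {l : List B} (hl : cs.IsReduced l) :
    dfold cs 1 l = cs.wordProd l := by
  induction l using List.reverseRecOn with
  | nil => simp
  | append_singleton l i ihl =>
    have hl₀ : cs.IsReduced l := by
      have := hl.take l.length
      rwa [List.take_left] at this
    rw [dfold_concat, ihl hl₀, cs.wordProd_append, cs.wordProd_singleton, rstep,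
      if_pos]
    rw [← cs.wordProd_singleton, ← cs.wordProd_append, hl, hl₀]
    simp

lemma length_dfold_one_le (l : List B) : cs.length (dfold cs 1 l) ≤ l.length := by
  have := length_dfold_le cs 1 l
  simpa using this

lemma reduced_of_length_dfold_one {l : List B} (h : cs.length (dfold cs 1 l) = l.length) :
    cs.IsReduced l ∧ cs.wordProd l = dfold cs 1 l := by
  induction l using List.reverseRecOn with
  | nil => simp [CoxeterSystem.IsReduced]
  | append_singleton l i ihl =>
    rw [dfold_concat] at h
    rcases rstep_cases cs (dfold cs 1 l) i with ⟨hc, he⟩ | ⟨hc, he⟩ <;> rw [he] at h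
    · have hlen : cs.length (dfold cs 1 l) = l.length := by
        have := length_dfold_one_le cs l
        simp only [List.length_append, List.length_singleton] at h
        omega
      obtain ⟨hred, hprod⟩ := ihl hlen
      constructor
      · show cs.length (cs.wordProd (l ++ [i])) = (l ++ [i]).length
        rw [cs.wordProd_append, cs.wordProd_singleton, hprod]
        simp only [List.length_append, List.length_singleton]
        omega
      · rw [dfold_concat, he, cs.wordProd_append, cs.wordProd_singleton, hprod]
    · exfalso
      have := length_dfold_one_le cs l
      simp only [List.length_append, List.length_singleton] at h
      omega

/-- The Demazure fold of an arbitrary word equals that of any reduced word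
of its Demazure product. -/
lemma dfold_eq_dfold_of_reduced : ∀ (l : List B) (x : W) (m : List B),
    cs.IsReduced m → cs.wordProd m = dfold cs 1 l → dfold cs x l = dfold cs x m := by
  intro l
  induction l using List.reverseRecOn with
  | nil =>
    intro x m hm hπ
    have : m.length = 0 := by rw [← hm, hπ]; simp
    rw [List.length_eq_zero_iff.mp this]
  | append_singleton l i ihl =>
    intro x m hm hπ
    obtain ⟨m₀, hm₀red, hm₀⟩ := cs.exists_reduced_word' (dfold cs 1 l)
    have hIH : ∀ y : W, dfold cs y l = dfold cs y m₀ := fun y => ihl y m₀ hm₀red hm₀.symm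
    rw [dfold_concat cs 1] at hπ
    rw [dfold_concat, hIH x]
    rcases rstep_cases cs (dfold cs 1 l) i with ⟨hc, he⟩ | ⟨hc, he⟩
    · -- ascent case : m is a reduced word for (dfold 1 l) * s_i, and so is m₀ ++ [i]
      rw [he] at hπ
      have hm₀i : cs.IsReduced (m₀ ++ [i]) := by
        show cs.length (cs.wordProd (m₀ ++ [i])) = (m₀ ++ [i]).length
        rw [cs.wordProd_append, cs.wordProd_singleton, ← hm₀]
        simp only [List.length_append, List.length_singleton]
        rw [hc, hm₀, hm₀red]
      have hπi : cs.wordProd (m₀ ++ [i]) = cs.wordProd m := by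
        rw [cs.wordProd_append, cs.wordProd_singleton, ← hm₀, hπ]
      have := dfold_eq_of_reduced cs hm₀i hm hπi x
      rw [← this, dfold_concat]
    · -- descent case
      rw [he] at hπ
      -- rstep (dfold x m₀) i = dfold x m₀
      obtain ⟨ρ, hρred, hρ⟩ := cs.exists_reduced_word' ((dfold cs 1 l) * cs.simple i)
      have hρi : cs.IsReduced (ρ ++ [i]) := by
        show cs.length (cs.wordProd (ρ ++ [i])) = (ρ ++ [i]).length
        rw [cs.wordProd_append, cs.wordProd_singleton, ← hρ, cs.simple_mul_simple_cancel_right]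
        simp only [List.length_append, List.length_singleton]
        have h5 : cs.length (cs.wordProd ρ) = ρ.length := hρred
        rw [← hρ] at h5
        omega
      have hπρ : cs.wordProd (ρ ++ [i]) = cs.wordProd m₀ := by
        rw [cs.wordProd_append, cs.wordProd_singleton, ← hρ, cs.simple_mul_simple_cancel_right,
          ← hm₀]
      have h1 : dfold cs x m₀ = rstep cs (dfold cs x ρ) i := by
        rw [← dfold_concat]
        exact (dfold_eq_of_reduced cs hρi hm₀red hπρ x).symm
      rw [h1, rstep_idem, ← h1]
      exact dfold_eq_of_reduced cs hm₀red hm (by rw [← hm₀, hπ]) x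

end IWP

namespace IWP

variable (cs : CoxeterSystem M W)


section Sigma

variable (σ : W → W) (hmul : ∀ u v : W, σ (u * v) = σ u * σ v)
  (hinvol : ∀ w : W, σ (σ w) = w) (hgen : ∀ i : B, ∃ j : B, σ (cs.simple i) = cs.simple j)

/-- the induced map on generator indices -/
noncomputable def istar (hgen : ∀ i : B, ∃ j : B, σ (cs.simple i) = cs.simple j) (i : B) : B :=
  Classical.choose (hgen i)

lemma sigma_simple (i : B) : σ (cs.simple i) = cs.simple (istar cs σ hgen i) :=
  Classical.choose_spec (hgen i)

include hmul

lemma sigma_one : σ 1 = 1 := by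
  have h := hmul 1 1
  rw [mul_one] at h
  exact (left_eq_mul.mp h)

lemma sigma_inv (w : W) : σ w⁻¹ = (σ w)⁻¹ := by
  have h := hmul w⁻¹ w
  rw [inv_mul_cancel, sigma_one σ hmul] at h
  exact eq_inv_of_mul_eq_one_left h.symm

include hgen in
lemma sigma_wordProd (l : List B) :
    σ (cs.wordProd l) = cs.wordProd (l.map (istar cs σ hgen)) := by
  induction l with
  | nil => simpa using sigma_one σ hmul
  | cons i l ih =>
    rw [cs.wordProd_cons, hmul, ih, List.map_cons, cs.wordProd_cons,
      sigma_simple cs σ hgen i]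

include hinvol hgen in
lemma sigma_length (w : W) : cs.length (σ w) = cs.length w := by
  have hle : ∀ v : W, cs.length (σ v) ≤ cs.length v := by
    intro v
    obtain ⟨ω, hred, rfl⟩ := cs.exists_reduced_word' v
    rw [sigma_wordProd cs σ hmul hgen]
    calc cs.length (cs.wordProd (ω.map (istar cs σ hgen)))
        ≤ (ω.map (istar cs σ hgen)).length := cs.length_wordProd_le _
      _ = ω.length := List.length_map _
      _ = cs.length (cs.wordProd ω) := hred.symm
  refine le_antisymm (hle w) ?_
  have := hle (σ w)
  rwa [hinvol] at this

include hinvol in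
lemma sigma_rstep (z : W) (i : B) :
    σ (rstep cs z i) = rstep cs (σ z) (istar cs σ hgen i) := by
  have hc : cs.length (σ z * cs.simple (istar cs σ hgen i)) = cs.length (z * cs.simple i) := by
    rw [← sigma_simple cs σ hgen i, ← hmul, sigma_length cs σ hmul hinvol hgen]
  have hz : cs.length (σ z) = cs.length z := sigma_length cs σ hmul hinvol hgen z
  rcases rstep_cases cs z i with ⟨h, he⟩ | ⟨h, he⟩ <;>
    rcases rstep_cases cs (σ z) (istar cs σ hgen i) with ⟨h', he'⟩ | ⟨h', he'⟩ <;>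
    rw [he, he']
  · rw [hmul, sigma_simple cs σ hgen i]
  · omega
  · omega

include hinvol in
lemma sigma_dfold_one (l : List B) :
    dfold cs 1 (l.map (istar cs σ hgen)) = σ (dfold cs 1 l) := by
  induction l using List.reverseRecOn with
  | nil => simpa using (sigma_one σ hmul).symm
  | append_singleton l i ih =>
    rw [List.map_append, List.map_singleton, dfold_concat, dfold_concat, ih,
      sigma_rstep cs σ hmul hinvol hgen]

end Sigma

section LStep

/-- One step of the 0-Hecke left action. -/
noncomputable def lstep (z : W) (j : B) : W :=
  if cs.length (cs.simple j * z) = cs.length z + 1 then cs.simple j * z else z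

lemma lstep_cases (z : W) (j : B) :
    (cs.length (cs.simple j * z) = cs.length z + 1 ∧ lstep cs z j = cs.simple j * z) ∨
    (cs.length (cs.simple j * z) + 1 = cs.length z ∧ lstep cs z j = z) := by
  rcases cs.length_simple_mul z j with h | h
  · left; exact ⟨h, if_pos h⟩
  · right
    refine ⟨h, if_neg ?_⟩
    omega

/-- Left and right folds through inverses. -/
lemma lstep_inv (z : W) (j : B) : (lstep cs z j)⁻¹ = rstep cs z⁻¹ j := by
  have hc : cs.length (z⁻¹ * cs.simple j) = cs.length (cs.simple j * z) := by
    rw [← cs.length_inv, mul_inv_rev, cs.inv_simple, inv_inv]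
  have hz : cs.length (z⁻¹) = cs.length z := cs.length_inv z
  rcases lstep_cases cs z j with ⟨h, he⟩ | ⟨h, he⟩ <;>
    rcases rstep_cases cs z⁻¹ j with ⟨h', he'⟩ | ⟨h', he'⟩ <;>
    rw [he, he']
  · rw [mul_inv_rev, cs.inv_simple]
  · omega
  · omega

noncomputable def efold (z : W) (m : List B) : W := m.foldl (lstep cs) z

@[simp] lemma efold_nil (z : W) : efold cs z [] = z := rfl

lemma efold_cons (z : W) (j : B) (m : List B) :
    efold cs z (j :: m) = efold cs (lstep cs z j) m := rfl

lemma efold_concat (z : W) (m : List B) (j : B) :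
    efold cs z (m ++ [j]) = lstep cs (efold cs z m) j := by
  rw [efold, List.foldl_append]; rfl

lemma efold_eq_inv_dfold (z : W) (m : List B) : efold cs z m = (dfold cs z⁻¹ m)⁻¹ := by
  induction m generalizing z with
  | nil => simp
  | cons j m ih =>
    have hd : dfold cs z⁻¹ (j :: m) = dfold cs (rstep cs z⁻¹ j) m := rfl
    rw [efold_cons, ih, hd, ← lstep_inv cs z j]

/-- Commutation of the left and right 0-Hecke actions. Uses the key lemma. -/
lemma lstep_rstep_comm (z : W) (i j : B) :
    lstep cs (rstep cs z i) j = rstep cs (lstep cs z j) i := by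
  rcases rstep_cases cs z i with ⟨hri, hei⟩ | ⟨hri, hei⟩ <;>
    rcases lstep_cases cs z j with ⟨hlj, hej⟩ | ⟨hlj, hej⟩
  · -- both ascents
    have hb : cs.length (cs.simple j * z * cs.simple i) ≤ cs.length z + 2 := by
      calc cs.length (cs.simple j * z * cs.simple i)
          ≤ cs.length (cs.simple j * z) + 1 := by
            rcases cs.length_mul_simple (cs.simple j * z) i with h | h <;> omega
        _ = cs.length z + 2 := by omega
    rcases cs.length_mul_simple (cs.simple j * z) i with hcase | hcase
    · -- ℓ(s_j z s_i) = ℓ z + 2 : both sides are s_j z s_i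
      rw [hei, hej]
      have h1 : cs.length (cs.simple j * (z * cs.simple i)) = cs.length (z * cs.simple i) + 1 := by
        rw [← mul_assoc, hcase, hlj, hri]
      have h2 : cs.length ((cs.simple j * z) * cs.simple i)
          = cs.length (cs.simple j * z) + 1 := hcase
      rw [lstep, if_pos h1, rstep, if_pos h2, mul_assoc]
    · -- ℓ(s_j z s_i) = ℓ z : key lemma gives s_j z s_i = z
      have h3 : cs.length (cs.simple j * z * cs.simple i) ≤ cs.length z := by omega
      have hkey := key_lemma cs z j i hlj hri h3
      -- s_j z = z s_i
      have hswap : cs.simple j * z = z * cs.simple i := by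
        have := congrArg (fun w => w * cs.simple i) hkey
        simpa [mul_assoc, cs.simple_mul_simple_cancel_right] using this
      rw [hei, hej]
      have h1 : cs.length (cs.simple j * (z * cs.simple i)) + 1
          = cs.length (z * cs.simple i) := by
        rw [← mul_assoc, hkey, hri]
      have h2 : cs.length ((cs.simple j * z) * cs.simple i) + 1
          = cs.length (cs.simple j * z) := by
        rw [hkey, hlj]
      rw [lstep, if_neg (by omega), rstep, if_neg (by omega), hswap]
  · -- right ascent, left descent
    rw [hei, hej]
    have h1 : cs.length (cs.simple j * (z * cs.simple i)) + 1 = cs.length (z * cs.simple i) := by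
      have hle : cs.length (cs.simple j * (z * cs.simple i)) ≤ cs.length z := by
        calc cs.length (cs.simple j * (z * cs.simple i))
            = cs.length ((cs.simple j * z) * cs.simple i) := by rw [mul_assoc]
          _ ≤ cs.length (cs.simple j * z) + 1 := by
              rcases cs.length_mul_simple (cs.simple j * z) i with h | h <;> omega
          _ = cs.length z := by omega
      rcases cs.length_simple_mul (z * cs.simple i) j with h | h <;> omega
    rw [lstep, if_neg (by omega), hei]
  · -- right descent, left ascent
    rw [hei, hej]
    have h1 : cs.length ((cs.simple j * z) * cs.simple i) + 1 = cs.length (cs.simple j * z) := by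
      have hle : cs.length ((cs.simple j * z) * cs.simple i) ≤ cs.length z := by
        calc cs.length ((cs.simple j * z) * cs.simple i)
            = cs.length (cs.simple j * (z * cs.simple i)) := by rw [mul_assoc]
          _ ≤ cs.length (z * cs.simple i) + 1 := by
              rcases cs.length_simple_mul (z * cs.simple i) j with h | h <;> omega
          _ = cs.length z := by omega
      rcases cs.length_mul_simple (cs.simple j * z) i with h | h <;> omega
    rw [rstep, if_neg (by omega)]
  · -- both descents
    rw [hei, hej, hei]

lemma rstep_efold (z : W) (m : List B) (i : B) :
    rstep cs (efold cs z m) i = efold cs (rstep cs z i) m := by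
  induction m generalizing z with
  | nil => rfl
  | cons j m ih =>
    rw [efold_cons, efold_cons, ih, lstep_rstep_comm]

end LStep

end IWP

namespace IWP

variable (cs : CoxeterSystem M W)

section Twisted

variable (σ : W → W) (hmul : ∀ u v : W, σ (u * v) = σ u * σ v)
  (hinvol : ∀ w : W, σ (σ w) = w) (hgen : ∀ i : B, ∃ j : B, σ (cs.simple i) = cs.simple j)

include hmul hinvol hgen

lemma sigma_mul_length {x : W} (hx : x⁻¹ = σ x) (i : B) :
    cs.length (σ (cs.simple i) * x) = cs.length (x * cs.simple i) := by
  have h1 : σ (cs.simple i) * x = σ (cs.simple i * x⁻¹) := by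
    rw [hmul, sigma_inv σ hmul, ← hx, inv_inv]
  rw [h1, sigma_length cs σ hmul hinvol hgen, ← cs.length_inv, mul_inv_rev,
    inv_inv, cs.inv_simple]

lemma invStep_ascent_ne {x : W} (hx : x⁻¹ = σ x) {i : B}
    (hasc : cs.length (x * cs.simple i) = cs.length x + 1)
    (hne : σ (cs.simple i) * x ≠ x * cs.simple i) :
    cs.length (σ (cs.simple i) * x * cs.simple i) = cs.length (x * cs.simple i) + 1 := by
  have hL : cs.length (σ (cs.simple i) * x) = cs.length x + 1 := by
    rw [sigma_mul_length cs σ hmul hinvol hgen hx i, hasc]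
  rw [sigma_simple cs σ hgen i] at hL ⊢
  set a := istar cs σ hgen i
  rcases cs.length_mul_simple (cs.simple a * x) i with h | h
  · rw [h, hL, hasc]
  · exfalso
    have h3 : cs.length (cs.simple a * x * cs.simple i) ≤ cs.length x := by omega
    have := key_lemma cs x a i hL hasc h3
    apply hne
    rw [sigma_simple cs σ hgen i]
    have := congrArg (fun w => w * cs.simple i) this
    simpa [mul_assoc, cs.simple_mul_simple_cancel_right] using this

lemma invStep_eq_lstep_rstep {x : W} (hx : x⁻¹ = σ x) (i : B) :
    invStep cs σ x i = lstep cs (rstep cs x i) (istar cs σ hgen i) := by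
  rcases cs.length_mul_simple x i with hasc | hdesc
  · -- ascent
    have hni : ¬ (cs.length (x * cs.simple i) < cs.length x) := by omega
    have hr : rstep cs x i = x * cs.simple i := if_pos hasc
    rw [invStep, if_neg hni, hr]
    by_cases hcomm : σ (cs.simple i) * x = x * cs.simple i
    · rw [if_pos hcomm]
      have hd : cs.length (cs.simple (istar cs σ hgen i) * (x * cs.simple i)) + 1
          = cs.length (x * cs.simple i) := by
        rw [← sigma_simple cs σ hgen i, ← mul_assoc, hcomm, cs.simple_mul_simple_cancel_right]
        omega
      rw [lstep, if_neg (by omega)]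
    · rw [if_neg hcomm]
      have hd : cs.length (cs.simple (istar cs σ hgen i) * (x * cs.simple i))
          = cs.length (x * cs.simple i) + 1 := by
        rw [← sigma_simple cs σ hgen i, ← mul_assoc]
        exact invStep_ascent_ne cs σ hmul hinvol hgen hx hasc hcomm
      rw [lstep, if_pos hd, ← mul_assoc, sigma_simple cs σ hgen i]
  · -- descent
    have hi : cs.length (x * cs.simple i) < cs.length x := by omega
    have hr : rstep cs x i = x := if_neg (by omega)
    have hd : cs.length (cs.simple (istar cs σ hgen i) * x) + 1 = cs.length x := by
      rw [← sigma_simple cs σ hgen i, sigma_mul_length cs σ hmul hinvol hgen hx i]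
      omega
    rw [invStep, if_pos hi, hr, lstep, if_neg (by omega)]

omit hgen in
lemma invStep_twisted {x : W} (hx : x⁻¹ = σ x) (i : B) :
    (invStep cs σ x i)⁻¹ = σ (invStep cs σ x i) := by
  rw [invStep]
  split_ifs with h1 h2
  · exact hx
  · rw [mul_inv_rev, cs.inv_simple, hmul, ← hx]
    have h3 : x⁻¹ * σ (cs.simple i) = cs.simple i * x⁻¹ := by
      have := congrArg (fun w => x⁻¹ * w * x⁻¹) h2
      simpa [mul_assoc] using this
    rw [h3]
  · rw [mul_inv_rev, mul_inv_rev, cs.inv_simple, hmul, hmul, ← hx, hinvol]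
    have hsinv : (σ (cs.simple i))⁻¹ = σ (cs.simple i) := by
      rw [← sigma_inv σ hmul, cs.inv_simple]
    rw [hsinv, mul_assoc]

omit hmul hinvol hgen in
lemma invWord_concat (x : W) (l : List B) (i : B) :
    invWord cs σ x (l ++ [i]) = invStep cs σ (invWord cs σ x l) i := by
  rw [invWord, List.foldl_append]
  rfl

omit hgen in
lemma invWord_twisted {x : W} (hx : x⁻¹ = σ x) (l : List B) :
    (invWord cs σ x l)⁻¹ = σ (invWord cs σ x l) := by
  induction l using List.reverseRecOn with
  | nil => exact hx
  | append_singleton l i ih =>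
    rw [invWord_concat]
    exact invStep_twisted cs σ hmul hinvol ih i

lemma invWord_formula {x : W} (hx : x⁻¹ = σ x) (l : List B) :
    invWord cs σ x l = efold cs (dfold cs x l) (l.map (istar cs σ hgen)) := by
  induction l using List.reverseRecOn with
  | nil => rfl
  | append_singleton l i ih =>
    rw [invWord_concat, invStep_eq_lstep_rstep cs σ hmul hinvol hgen
      (invWord_twisted cs σ hmul hinvol hx l) i, ih, rstep_efold, ← efold_concat,
      ← dfold_concat, List.map_append, List.map_singleton]

/-- reduced word choice -/
noncomputable def redw (v : W) : List B := Classical.choose (cs.exists_reduced_word' v)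

omit hmul hinvol hgen in
lemma redw_reduced (v : W) : cs.IsReduced (redw cs v) :=
  (Classical.choose_spec (cs.exists_reduced_word' v)).1

omit hmul hinvol hgen in
lemma redw_prod (v : W) : cs.wordProd (redw cs v) = v :=
  (Classical.choose_spec (cs.exists_reduced_word' v)).2.symm

omit hmul hinvol hgen in
lemma redw_length (v : W) : (redw cs v).length = cs.length v := by
  have := redw_reduced cs v
  rw [CoxeterSystem.IsReduced, redw_prod] at this
  exact this.symm

/-- canonical form of `invWord` through the Demazure product. -/
noncomputable def gfun (x v : W) : W :=
  (dfold cs (dfold cs x (redw cs v))⁻¹ (redw cs (σ v)))⁻¹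

lemma invWord_eq_gfun {x : W} (hx : x⁻¹ = σ x) (l : List B) :
    invWord cs σ x l = gfun cs σ x (dfold cs 1 l) := by
  set v := dfold cs 1 l with hv
  rw [invWord_formula cs σ hmul hinvol hgen hx l, efold_eq_inv_dfold, gfun]
  have h1 : dfold cs x l = dfold cs x (redw cs v) :=
    dfold_eq_dfold_of_reduced cs l x (redw cs v) (redw_reduced cs v) (redw_prod cs v)
  rw [← h1]
  congr 1
  apply dfold_eq_dfold_of_reduced cs (l.map (istar cs σ hgen)) _ _ (redw_reduced cs _)
  rw [redw_prod, sigma_dfold_one cs σ hmul hinvol hgen]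

lemma mem_heckeAtoms_iff {x : W} (hx : x⁻¹ = σ x) (y w : W) :
    w ∈ HeckeAtoms cs σ x y ↔ gfun cs σ x w = y := by
  constructor
  · rintro ⟨l, hπ, hred, hinv⟩
    have h1 : dfold cs 1 l = w := by rw [dfold_one_reduced cs hred, hπ]
    rw [← h1, ← invWord_eq_gfun cs σ hmul hinvol hgen hx l, hinv]
  · intro hg
    refine ⟨redw cs w, redw_prod cs w, redw_reduced cs w, ?_⟩
    rw [invWord_eq_gfun cs σ hmul hinvol hgen hx, dfold_one_reduced cs (redw_reduced cs w),
      redw_prod, hg]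

theorem main_thm {x y : W} (hx : x⁻¹ = σ x) :
    InvWords cs σ x y = ⋃ w ∈ Atoms cs σ x y, ReducedWords cs w := by
  ext l
  simp only [Set.mem_iUnion, Set.mem_setOf_eq]
  constructor
  · rintro ⟨hl, hmin⟩
    set v := dfold cs 1 l with hv
    have hg : gfun cs σ x v = y := by
      rw [← invWord_eq_gfun cs σ hmul hinvol hgen hx l, hl]
    have hvy : invWord cs σ x (redw cs v) = y := by
      rw [invWord_eq_gfun cs σ hmul hinvol hgen hx, dfold_one_reduced cs (redw_reduced cs v),
        redw_prod, hg]
    have hlen1 : l.length ≤ cs.length v := by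
      have := hmin (redw cs v) hvy
      rwa [redw_length] at this
    have hlen2 : cs.length v = l.length := le_antisymm (length_dfold_one_le cs l) hlen1
    obtain ⟨hredl, hprodl⟩ := reduced_of_length_dfold_one cs hlen2
    refine ⟨v, ?_, hprodl.trans hv.symm, hredl⟩
    refine ⟨(mem_heckeAtoms_iff cs σ hmul hinvol hgen hx y v).mpr hg, ?_⟩
    intro v' hv'
    have hg' := (mem_heckeAtoms_iff cs σ hmul hinvol hgen hx y v').mp hv'
    have hv'y : invWord cs σ x (redw cs v') = y := by
      rw [invWord_eq_gfun cs σ hmul hinvol hgen hx, dfold_one_reduced cs (redw_reduced cs v'),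
        redw_prod, hg']
    have := hmin (redw cs v') hv'y
    rw [redw_length] at this
    omega
  · rintro ⟨v, ⟨hvH, hvmin⟩, hπ, hred⟩
    have hg := (mem_heckeAtoms_iff cs σ hmul hinvol hgen hx y v).mp hvH
    have h1 : dfold cs 1 l = v := by rw [dfold_one_reduced cs hred, hπ]
    constructor
    · rw [invWord_eq_gfun cs σ hmul hinvol hgen hx, h1, hg]
    · intro l' hl'
      have hlen_l : l.length = cs.length v := by
        have : cs.IsReduced l := hred
        rw [CoxeterSystem.IsReduced, hπ] at this
        omega
      set v' := dfold cs 1 l' with hv'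
      have hg' : gfun cs σ x v' = y := by
        rw [← invWord_eq_gfun cs σ hmul hinvol hgen hx l', hl']
      have hv'H : v' ∈ HeckeAtoms cs σ x y :=
        (mem_heckeAtoms_iff cs σ hmul hinvol hgen hx y v').mpr hg'
      have hm := hvmin v' hv'H
      have h2 := length_dfold_one_le cs l'
      rw [← hv'] at h2
      omega

end Twisted

end IWP

/-- For twisted involutions `x, y` in a twisted Coxeter system `(W, S, *)`,
the involution words of `y` relative to `x` are exactly the reduced words of the atoms of `y`
relative to `x`: `R̂_*(x,y) = ⋃_{w ∈ A_*(x,y)} R(w)`.  Consequently each set `R̂_*(x,y)` is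
preserved by the braid relations of `(W, S)`. -/
theorem involution_words_eq_union_reduced_words_of_atoms
    (cs : CoxeterSystem M W) (σ : W → W)
    (hmul : ∀ u v : W, σ (u * v) = σ u * σ v)
    (hinvol : ∀ w : W, σ (σ w) = w)
    (hgen : ∀ i : B, ∃ j : B, σ (cs.simple i) = cs.simple j)
    (x y : W) (hx : x⁻¹ = σ x) (hy : y⁻¹ = σ y) :
    InvWords cs σ x y = ⋃ w ∈ Atoms cs σ x y, ReducedWords cs w :=
  IWP.main_thm cs σ hmul hinvol hgen hx
end

section
/- Let (W,S,*) be any twisted Coxeter system and let x, y ∈ I_* be twisted involutions. Then every atom w ∈ A_*(x,y) satisfies w* y ≤ x w in the Bruhat order on W; that is, A_*(x,y) ⊆ B'_*(x,y) := {w ∈ W : w* y ≤ x w}. -/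
open CoxeterSystem
open scoped Classical

variable {B W : Type*} [Group W] {M : CoxeterMatrix B}

namespace AtomsBruhatAux

open List

variable (cs : CoxeterSystem M W)

local prefix:100 "σ" => cs.simple
local prefix:100 "π" => cs.wordProd
local prefix:100 "ℓ" => cs.length

/-- One flip of the permutation representation on `W × ZMod 2`. -/
noncomputable def flip (i : B) : W × ZMod 2 → W × ZMod 2 :=
  fun p => (σ i * p.1 * σ i, p.2 + if p.1 = σ i then 1 else 0)

lemma zmod2_add_one_one : ∀ a : ZMod 2, a + 1 + 1 = a := by decide

lemma zmod2_add_self : ∀ a : ZMod 2, a + a = 0 := by decide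

lemma zmod2_cases : ∀ a : ZMod 2, a = 0 ∨ a = 1 := by decide

lemma flip_flip (i : B) (p : W × ZMod 2) : flip cs i (flip cs i p) = p := by
  unfold flip
  obtain ⟨w, e⟩ := p
  rw [Prod.mk.injEq]
  refine ⟨?_, ?_⟩
  · simp [mul_assoc]
  · have h : (σ i * w * σ i = σ i) ↔ (w = σ i) := by
      constructor
      · intro h
        have := congrArg (fun z => σ i * z * σ i) h
        simpa [mul_assoc] using this
      · intro h; simp [h]
    by_cases hw : w = σ i
    · have h2 : σ i * σ i * σ i = σ i := by simp
      simp only [hw, if_pos rfl, if_pos h2]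
      exact zmod2_add_one_one e
    · simp [hw, h.not.mpr hw]

noncomputable def flipPerm (i : B) : Equiv.Perm (W × ZMod 2) :=
  ⟨flip cs i, flip cs i, fun p => flip_flip cs i p, fun p => flip_flip cs i p⟩

lemma flipPerm_apply (i : B) (p : W × ZMod 2) :
    flipPerm cs i p = (σ i * p.1 * σ i, p.2 + if p.1 = σ i then 1 else 0) := rfl

/-- The parity sum of occurrences of `w` in a list. -/
noncomputable def psum (w : W) (L : List W) : ZMod 2 :=
  (L.map (fun t => if w = t then (1 : ZMod 2) else 0)).sum

@[simp] lemma psum_nil (w : W) : psum w [] = 0 := rfl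

lemma psum_cons (w a : W) (L : List W) :
    psum w (a :: L) = (if w = a then 1 else 0) + psum w L := by
  simp [psum]

lemma prod_map_flipPerm (ω : List B) (w : W) (e : ZMod 2) :
    ((ω.map (flipPerm cs)).prod) (w, e) =
      (π ω * w * (π ω)⁻¹, e + psum w (cs.rightInvSeq ω)) := by
  induction ω with
  | nil => simp [psum]
  | cons i ω ih =>
    rw [List.map_cons, List.prod_cons, Equiv.Perm.mul_apply, ih]
    rw [flipPerm_apply]
    simp only [rightInvSeq]
    rw [psum_cons, Prod.mk.injEq]
    refine ⟨?_, ?_⟩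
    · rw [wordProd_cons]
      simp [mul_assoc, cs.inv_simple]
    · have hiff : (π ω * w * (π ω)⁻¹ = σ i) ↔ (w = (π ω)⁻¹ * σ i * π ω) := by
        constructor
        · intro h
          rw [← h]; group
        · intro h
          rw [h]; group
      by_cases hc : w = (π ω)⁻¹ * σ i * π ω
      · rw [if_pos (hiff.mpr hc), if_pos hc]; ring
      · rw [if_neg (fun h => hc (hiff.mp h)), if_neg hc]; ring

lemma drop_alternatingWord (i i' : B) (n j : ℕ) :
    (alternatingWord i i' n).drop j = alternatingWord i i' (n - j) := by
  induction n generalizing j with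
  | zero => simp [alternatingWord]
  | succ n ih =>
    cases j with
    | zero => simp
    | succ j =>
      rw [alternatingWord_succ' i i' n, List.drop_succ_cons, ih j]
      congr 1
      omega

lemma simple_conj_pow (i i' : B) (a : ℕ) :
    σ i' * (σ i * σ i') ^ a = ((σ i * σ i')⁻¹) ^ a * σ i' := by
  induction a with
  | zero => simp
  | succ a ih =>
    have key : σ i' * (σ i * σ i') = (σ i * σ i')⁻¹ * σ i' := by
      rw [mul_inv_rev]
      simp [mul_assoc, cs.inv_simple]
    rw [pow_succ, ← mul_assoc, ih, mul_assoc, key, ← mul_assoc, ← pow_succ]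

lemma alternating_r_formula (i i' : B) (k : ℕ) :
    (π (alternatingWord i i' k))⁻¹ * π (alternatingWord i i' (k + 1)) =
      ((σ i * σ i')⁻¹) ^ k * σ i' := by
  have hq := cs.prod_alternatingWord_eq_mul_pow i i' k
  have hq' := cs.prod_alternatingWord_eq_mul_pow i i' (k+1)
  rcases Nat.even_or_odd k with he | ho
  · have hk1 : ¬ Even (k+1) := by simpa [Nat.even_add_one] using he
    rw [if_pos he] at hq
    rw [if_neg hk1] at hq'
    obtain ⟨a, rfl⟩ := he
    have h2 : (a + a + 1)/2 = (a + a)/2 := by omega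
    calc ((π (alternatingWord i i' (a+a)))⁻¹ * π (alternatingWord i i' (a + a + 1)))
        = ((σ i * σ i') ^ ((a+a)/2))⁻¹ * (σ i' * (σ i * σ i') ^ ((a+a)/2)) := by
          rw [hq, hq', one_mul, h2]
      _ = ((σ i * σ i') ^ ((a+a)/2))⁻¹ * (((σ i * σ i')⁻¹) ^ ((a+a)/2) * σ i') := by
          rw [simple_conj_pow cs]
      _ = ((σ i * σ i')⁻¹) ^ (a+a) * σ i' := by
          rw [← inv_pow, ← mul_assoc, ← pow_add]
          congr 2
          omega
  · have hk1 : Even (k+1) := by simpa [Nat.even_add_one, Nat.not_even_iff_odd] using ho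
    rw [if_neg (by simpa [Nat.not_even_iff_odd] using ho)] at hq
    rw [if_pos hk1] at hq'
    have h2 : (k + 1)/2 = k/2 + 1 := by
      obtain ⟨a, ha⟩ := ho
      omega
    calc ((π (alternatingWord i i' k))⁻¹ * π (alternatingWord i i' (k + 1)))
        = (σ i' * (σ i * σ i') ^ (k/2))⁻¹ * (σ i * σ i') ^ (k/2 + 1) := by
          rw [hq, hq', one_mul, h2]
      _ = ((σ i * σ i') ^ (k/2))⁻¹ * (σ i' * (σ i * σ i') ^ (k/2 + 1)) := by
          rw [mul_inv_rev, cs.inv_simple, mul_assoc]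
      _ = ((σ i * σ i') ^ (k/2))⁻¹ * (((σ i * σ i')⁻¹) ^ (k/2 + 1) * σ i') := by
          rw [simple_conj_pow cs]
      _ = ((σ i * σ i')⁻¹) ^ k * σ i' := by
          rw [← inv_pow, ← mul_assoc, ← pow_add]
          congr 2
          obtain ⟨a, ha⟩ := ho
          omega

lemma getD_ris_alternating (i i' : B) (m : ℕ) (j : ℕ) (hj : j < 2 * m) :
    (cs.rightInvSeq (alternatingWord i i' (2 * m))).getD j 1 =
      ((σ i * σ i')⁻¹) ^ (2 * m - j - 1) * σ i' := by
  rw [cs.getD_rightInvSeq, drop_alternatingWord]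
  have h2 : 2*m - j = (2*m - (j+1)) + 1 := by omega
  have hlet : (Option.map cs.simple ((alternatingWord i i' (2*m))[j]?)).getD 1
      * π (alternatingWord i i' (2 * m - (j+1)))
      = π (alternatingWord i i' (2*m - j)) := by
    have h1 : (alternatingWord i i' (2*m))[j]? = ((alternatingWord i i' (2*m)).drop j)[0]? := by
      rw [List.getElem?_drop]
      simp
    rw [h1, drop_alternatingWord, h2, alternatingWord_succ']
    simp [wordProd_cons]
  rw [mul_assoc, hlet, h2, alternating_r_formula]
  congr 2

lemma psum_eq_sum_range {α : Type*} [One α] (w : α) (L : List α) :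
    (L.map (fun t => if w = t then (1 : ZMod 2) else 0)).sum
      = ∑ j ∈ Finset.range L.length, (if w = L.getD j 1 then (1 : ZMod 2) else 0) := by
  induction L with
  | nil => simp
  | cons a L ih =>
    rw [List.map_cons, List.sum_cons, ih, List.length_cons, Finset.sum_range_succ']
    simp only [List.getD_cons_succ, List.getD_cons_zero]
    rw [add_comm]

lemma prod_map_alternating {G : Type*} [Monoid G] (f : B → G) (i i' : B) (m : ℕ) :
    ((alternatingWord i i' (2 * m)).map f).prod = (f i * f i') ^ m := by
  induction m with
  | zero => simp [alternatingWord]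
  | succ m ih =>
    have h1 : 2 * (m+1) = (2*m + 1) + 1 := by omega
    rw [h1, alternatingWord_succ, alternatingWord_succ]
    rw [List.concat_eq_append, List.concat_eq_append]
    simp only [List.map_append, List.prod_append, List.map_cons, List.map_nil,
      List.prod_cons, List.prod_nil]
    rw [ih, pow_succ]
    simp [mul_assoc]

lemma flipPerm_liftable : CoxeterMatrix.IsLiftable M (flipPerm cs) := by
  intro i i'
  set m := M i i' with hm
  apply Equiv.ext
  rintro ⟨w, e⟩
  rw [← prod_map_alternating (flipPerm cs) i i' m, prod_map_flipPerm]
  have hπ : π (alternatingWord i i' (2*m)) = 1 := by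
    rw [cs.prod_alternatingWord_eq_mul_pow, if_pos (by exact even_two_mul m)]
    have : 2 * m / 2 = m := by omega
    rw [this, one_mul, hm, cs.simple_mul_simple_pow]
  have hsum : psum w (cs.rightInvSeq (alternatingWord i i' (2*m))) = 0 := by
    rw [psum, psum_eq_sum_range]
    have hlen : (cs.rightInvSeq (alternatingWord i i' (2*m))).length = m + m := by
      rw [cs.length_rightInvSeq, length_alternatingWord]
      omega
    rw [hlen, Finset.sum_range_add]
    have heq : ∀ j ∈ Finset.range m,
        (if w = (cs.rightInvSeq (alternatingWord i i' (2*m))).getD (m + j) 1 then (1:ZMod 2) else 0)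
        = (if w = (cs.rightInvSeq (alternatingWord i i' (2*m))).getD j 1 then (1:ZMod 2) else 0) := by
      intro j hj
      rw [Finset.mem_range] at hj
      rw [getD_ris_alternating cs i i' m j (by omega),
        getD_ris_alternating cs i i' m (m+j) (by omega)]
      have hz : ((σ i * σ i')⁻¹) ^ (2*m - j - 1) = ((σ i * σ i')⁻¹) ^ (2*m - (m+j) - 1) := by
        have h3 : 2*m - j - 1 = (2*m - (m+j) - 1) + m := by omega
        have h4 : ((σ i * σ i')⁻¹) ^ m = 1 := by
          rw [inv_pow, hm, cs.simple_mul_simple_pow, inv_one]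
        rw [h3, pow_add, h4, mul_one]
      rw [hz]
    rw [Finset.sum_congr rfl heq, ← Finset.sum_add_distrib]
    apply Finset.sum_eq_zero
    intro j hj
    exact zmod2_add_self _
  rw [hπ, hsum]
  simp

/-- The permutation representation of `W` on `W × ZMod 2`. -/
noncomputable def permRep : W →* Equiv.Perm (W × ZMod 2) :=
  cs.lift ⟨flipPerm cs, flipPerm_liftable cs⟩

lemma permRep_simple (i : B) : permRep cs (σ i) = flipPerm cs i :=
  cs.lift_apply_simple (flipPerm_liftable cs) i

lemma permRep_wordProd (ω : List B) :
    permRep cs (π ω) = ((ω.map (flipPerm cs)).prod) := by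
  induction ω with
  | nil => simp [map_one]
  | cons i ω ih =>
    rw [wordProd_cons, map_mul, permRep_simple, ih, List.map_cons, List.prod_cons]

/-- The reflection-parity cocycle. -/
noncomputable def eta (w t : W) : ZMod 2 := ((permRep cs w) (t, 0)).2

lemma permRep_apply (w : W) (p : W × ZMod 2) :
    permRep cs w p = (w * p.1 * w⁻¹, p.2 + eta cs w p.1) := by
  obtain ⟨ω, rfl⟩ := cs.wordProd_surjective w
  rw [permRep_wordProd, prod_map_flipPerm]
  unfold eta
  rw [permRep_wordProd, prod_map_flipPerm]
  simp

lemma eta_wordProd (ω : List B) (t : W) :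
    eta cs (π ω) t = psum t (cs.rightInvSeq ω) := by
  unfold eta
  rw [permRep_wordProd, prod_map_flipPerm]
  simp

lemma eta_simple (i : B) (t : W) :
    eta cs (σ i) t = if t = σ i then 1 else 0 := by
  unfold eta
  rw [permRep_simple, flipPerm_apply]
  simp

lemma eta_mul (u v t : W) :
    eta cs (u * v) t = eta cs v t + eta cs u (v * t * v⁻¹) := by
  have h1 : ((permRep cs) (u * v)) (t, 0) = (permRep cs u) ((permRep cs v) (t, 0)) := by
    rw [map_mul]
    rfl
  unfold eta
  rw [h1, permRep_apply cs v (t, 0), permRep_apply cs u]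
  simp only []
  rw [zero_add]
  rfl

/-- `η(t, t) = 1` for any reflection `t`. -/
lemma eta_refl_self {t : W} (ht : cs.IsReflection t) : eta cs t t = 1 := by
  obtain ⟨w, j, rfl⟩ := ht
  obtain ⟨α, rfl⟩ := cs.wordProd_surjective w
  induction α with
  | nil => simp [eta_simple]
  | cons k α ih =>
    have hdecomp : π (k :: α) * σ j * (π (k :: α))⁻¹
        = σ k * ((π α * σ j * (π α)⁻¹) * σ k) := by
      rw [wordProd_cons, mul_inv_rev, cs.inv_simple]
      simp [mul_assoc]
    rw [hdecomp]
    set t' := π α * σ j * (π α)⁻¹ with hdef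
    have h4 : (t' * σ k) * (σ k * (t' * σ k)) * (t' * σ k)⁻¹ = t' := by
      rw [mul_inv_rev, cs.inv_simple]
      simp [mul_assoc]
    have h6 : σ k * (σ k * (t' * σ k)) * (σ k)⁻¹ = t' := by
      rw [cs.inv_simple]
      simp [mul_assoc]
    rw [eta_mul, h4, eta_mul, h6, ih, eta_simple, eta_simple]
    have h7 : (σ k * (t' * σ k) = σ k) ↔ (t' = σ k) := by
      constructor
      · intro h
        have h1 : t' * σ k = 1 := by
          apply mul_left_cancel (a := σ k)
          rw [h, mul_one]
        rw [mul_eq_one_iff_eq_inv] at h1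
        rw [h1, cs.inv_simple]
      · intro h
        rw [h]
        simp
    by_cases hc : t' = σ k
    · rw [if_pos (h7.mpr hc), if_pos hc]
      decide
    · rw [if_neg (fun h => hc (h7.mp h)), if_neg hc]
      simp

/-- If `η (π ω) t ≠ 0` then `t` occurs in the right inversion sequence of `ω`. -/
lemma mem_ris_of_eta_ne_zero {ω : List B} {t : W} (h : eta cs (π ω) t ≠ 0) :
    t ∈ cs.rightInvSeq ω := by
  by_contra hmem
  apply h
  rw [eta_wordProd]
  unfold psum
  apply List.sum_eq_zero
  intro x hx
  obtain ⟨a, ha, rfl⟩ := List.mem_map.mp hx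
  rw [if_neg]
  intro h'
  exact hmem (h' ▸ ha)

/-- `η` detects right inversions: if `ℓ(w t) < ℓ(w)` then `η w t = 1`. -/
lemma eta_eq_one_of_descent {w t : W} (ht : cs.IsReflection t)
    (hlt : ℓ (w * t) < ℓ w) : eta cs w t = 1 := by
  have huw : w = (w * t) * t := by
    rw [mul_assoc, ht.mul_self, mul_one]
  have h1 : eta cs w t = eta cs t t + eta cs (w * t) (t * t * t⁻¹) := by
    conv_lhs => rw [huw]
    exact eta_mul cs (w * t) t t
  have h2 : t * t * t⁻¹ = t := by
    rw [ht.mul_self, one_mul, ht.inv]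
  rw [h2, eta_refl_self cs ht] at h1
  have h3 : eta cs (w * t) t = 0 := by
    rcases zmod2_cases (eta cs (w * t) t) with h | h
    · exact h
    · exfalso
      obtain ⟨ωu, hred, hωu⟩ := cs.exists_reduced_word' (w * t)
      have hmem : t ∈ cs.rightInvSeq ωu := by
        apply mem_ris_of_eta_ne_zero cs
        rw [← hωu, h]
        norm_num
      have hinv := cs.isRightInversion_of_mem_rightInvSeq hred hmem
      rw [← hωu] at hinv
      have : ℓ (w * t * t) < ℓ (w * t) := hinv.2
      rw [mul_assoc, ht.mul_self, mul_one] at this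
      omega
  rw [h1, h3, add_zero]

/-- **Strong exchange property.** -/
lemma strong_exchange (ω : List B) {t : W} (ht : cs.IsReflection t)
    (hlt : ℓ (π ω * t) < ℓ (π ω)) :
    ∃ j < ω.length, π ω * t = π (ω.eraseIdx j) := by
  have h1 : eta cs (π ω) t = 1 := eta_eq_one_of_descent cs ht hlt
  have hmem : t ∈ cs.rightInvSeq ω := by
    apply mem_ris_of_eta_ne_zero cs
    rw [h1]
    norm_num
  obtain ⟨j, hj, hget⟩ := List.mem_iff_getElem.mp hmem
  rw [cs.length_rightInvSeq] at hj
  refine ⟨j, hj, ?_⟩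
  have := cs.wordProd_mul_getD_rightInvSeq ω j
  rw [List.getD_eq_getElem _ 1 (by rw [cs.length_rightInvSeq]; exact hj)] at this
  rw [hget] at this
  exact this

lemma reverse_eraseIdx {α : Type*} (l : List α) (j : ℕ) (hj : j < l.length) :
    (l.reverse.eraseIdx j).reverse = l.eraseIdx (l.length - 1 - j) := by
  rw [List.eraseIdx_eq_take_drop_succ, List.eraseIdx_eq_take_drop_succ]
  rw [List.take_reverse, List.drop_reverse]
  rw [List.reverse_append, List.reverse_reverse, List.reverse_reverse]
  have h1 : l.length - (j + 1) = l.length - 1 - j := by omega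
  have h2 : l.length - j = (l.length - 1 - j) + 1 := by omega
  rw [h1, h2]

/-- Left version of strong exchange. -/
lemma strong_exchange_left (ω : List B) {t : W} (ht : cs.IsReflection t)
    (hlt : ℓ (t * π ω) < ℓ (π ω)) :
    ∃ j < ω.length, t * π ω = π (ω.eraseIdx j) := by
  have hinv : ℓ (π ω.reverse * t) < ℓ (π ω.reverse) := by
    rw [wordProd_reverse]
    have h : (π ω)⁻¹ * t = (t * π ω)⁻¹ := by
      rw [mul_inv_rev, ht.inv]
    rw [h, cs.length_inv, cs.length_inv]
    exact hlt
  obtain ⟨j, hj, hE⟩ := strong_exchange cs ω.reverse ht hinv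
  rw [List.length_reverse] at hj
  refine ⟨ω.length - 1 - j, by omega, ?_⟩
  have h2 : t * π ω = (π ω.reverse * t)⁻¹ := by
    rw [wordProd_reverse, mul_inv_rev, inv_inv, ht.inv]
  rw [h2, hE, ← wordProd_reverse, reverse_eraseIdx ω j hj]


/-! ### Bruhat order basics -/

lemma bruhat_step {a b : W} (t : W) (ht : cs.IsReflection t) (hb : b = a * t)
    (hlen : ℓ a < ℓ b) : BruhatLE cs a b :=
  Relation.ReflTransGen.single ⟨⟨t, ht, hb⟩, hlen⟩

lemma bruhat_ascent_simple {a : W} (i : B) (h : ℓ a < ℓ (a * σ i)) :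
    BruhatLE cs a (a * σ i) :=
  bruhat_step cs (σ i) (cs.isReflection_simple i) rfl h

lemma bruhat_descent {w t : W} (ht : cs.IsReflection t) (hlt : ℓ (w * t) < ℓ w) :
    BruhatLE cs (w * t) w :=
  bruhat_step cs t ht (by rw [mul_assoc, ht.mul_self, mul_one]) hlt

lemma bruhat_trans {a b c : W} (h1 : BruhatLE cs a b) (h2 : BruhatLE cs b c) :
    BruhatLE cs a c :=
  Relation.ReflTransGen.trans h1 h2

lemma bruhat_refl (a : W) : BruhatLE cs a a := Relation.ReflTransGen.refl

/-- The main mutual induction: the lifting property of the Bruhat order. -/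
lemma bruhat_main : ∀ n : ℕ, ∀ v : W, ℓ v = n →
    ((∀ i : B, ℓ (v * σ i) < ℓ v → ∀ u : W, BruhatLE cs u v →
        BruhatLE cs (u * σ i) v ∧
          (BruhatLE cs u (v * σ i) ∨ BruhatLE cs (u * σ i) (v * σ i)))
    ∧ (∀ i : B, ℓ v < ℓ (v * σ i) → ∀ u : W, BruhatLE cs u v →
        BruhatLE cs (u * σ i) (v * σ i))) := by
  intro n
  induction n using Nat.strong_induction_on with
  | _ n IH =>
  intro v hv
  constructor
  · -- Φ : descent case
    intro i hdes u hu
    rcases Relation.ReflTransGen.cases_tail hu with rfl | ⟨a, hua, ⟨⟨t', ht', hv'⟩, hlen⟩⟩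
    · constructor
      · exact bruhat_descent cs (cs.isReflection_simple i) hdes
      · exact Or.inr (bruhat_refl cs _)
    · have hvs_len : ℓ (v * σ i) + 1 = ℓ v := by
        rcases cs.length_mul_simple v i with h | h
        · omega
        · exact h
      have hat' : v * t' = a := by
        rw [hv', mul_assoc, ht'.mul_self, mul_one]
      by_cases hav : a = v * σ i
      · constructor
        · -- u s ≤ a s = v, using Z at a
          have hasc : ℓ a < ℓ (a * σ i) := by
            rw [hav, cs.simple_mul_simple_cancel_right]
            omega
          have hZ := (IH (ℓ a) (by omega) a rfl).2 i hasc u hua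
          rw [hav, cs.simple_mul_simple_cancel_right] at hZ
          exact hZ
        · exact Or.inl (hav ▸ hua)
      · rcases cs.length_mul_simple a i with hasc | hdes_a
        · -- ascent at a
          have hZ := (IH (ℓ a) (by omega) a rfl).2 i (by omega) u hua
          -- compare ℓ (a s) and ℓ (v s)
          have hrefl_c : cs.IsReflection (σ i * t' * σ i) := by
            have := ht'.conj (σ i)
            rwa [cs.inv_simple] at this
          have hconj : v * σ i = (a * σ i) * (σ i * t' * σ i) := by
            rw [hv']
            simp [mul_assoc, cs.simple_mul_simple_cancel_left]
          have hne : ℓ (a * σ i) ≠ ℓ (v * σ i) := by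
            intro heq
            have hodd := hrefl_c.odd_length
            have hmod := cs.length_mul_mod_two (a * σ i) (σ i * t' * σ i)
            rw [← hconj] at hmod
            obtain ⟨c, hc⟩ := hodd
            omega
          rcases Nat.lt_or_ge (ℓ (a * σ i)) (ℓ (v * σ i)) with hlt2 | hge2
          · -- a s < v s : step
            have hstep : BruhatLE cs (a * σ i) (v * σ i) :=
              bruhat_step cs _ hrefl_c hconj hlt2
            have h1 : BruhatLE cs (u * σ i) (v * σ i) := bruhat_trans cs hZ hstep
            have hstep2 : BruhatLE cs (v * σ i) v := by
              apply bruhat_step cs (σ i) (cs.isReflection_simple i)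
              · rw [cs.simple_mul_simple_cancel_right]
              · omega
            exact ⟨bruhat_trans cs h1 hstep2, Or.inr h1⟩
          · -- corner case : ℓ (v s) < ℓ (a s), forces a = v s via exchange
            exfalso
            have hcorner : ℓ (v * σ i) < ℓ (a * σ i) := by omega
            -- ℓ a = n - 1
            have ha_len : ℓ a + 1 = n := by omega
            obtain ⟨ωvs, hred, hvs⟩ := cs.exists_reduced_word' (v * σ i)
            have hlen_ωvs : ωvs.length = ℓ (v * σ i) := by
              rw [hvs] at *
              exact hred.symm
            have hπ : π (ωvs ++ [i]) = v := by
              rw [wordProd_append, wordProd_singleton, ← hvs,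
                cs.simple_mul_simple_cancel_right]
            have hSE : ℓ (π (ωvs ++ [i]) * t') < ℓ (π (ωvs ++ [i])) := by
              rw [hπ, hat']
              omega
            obtain ⟨j, hj, hEj⟩ := strong_exchange cs (ωvs ++ [i]) ht' hSE
            rw [hπ, hat'] at hEj
            rw [List.length_append, List.length_singleton] at hj
            rcases Nat.lt_or_ge j ωvs.length with hjlt | hjge
            · -- a ends with s, contradiction with ascent at a
              rw [List.eraseIdx_append_of_lt_length hjlt] at hEj
              have : a * σ i = π (ωvs.eraseIdx j) := by
                rw [hEj, wordProd_append, wordProd_singleton, mul_assoc,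
                  cs.simple_mul_simple_self, mul_one]
              have hle : ℓ (a * σ i) ≤ (ωvs.eraseIdx j).length :=
                this ▸ cs.length_wordProd_le _
              rw [List.length_eraseIdx_of_lt hjlt] at hle
              omega
            · -- j is the last position: a = v s, contradiction
              have hjeq : j = ωvs.length := by omega
              rw [hjeq] at hEj
              have herase : (ωvs ++ [i]).eraseIdx ωvs.length = ωvs := by
                rw [List.eraseIdx_append_of_length_le (le_refl _)]
                simp
              rw [herase, ← hvs] at hEj
              exact hav hEj
        · -- descent at a : use Φ at a
          have hΦ := (IH (ℓ a) (by omega) a rfl).1 i (by omega) u hua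
          obtain ⟨P1, P2⟩ := hΦ
          have hstepav : BruhatLE cs a v := bruhat_step cs t' ht' hv' hlen
          refine ⟨bruhat_trans cs P1 hstepav, ?_⟩
          -- as ⋖ vs
          have hrefl_c : cs.IsReflection (σ i * t' * σ i) := by
            have := ht'.conj (σ i)
            rwa [cs.inv_simple] at this
          have hconj : v * σ i = (a * σ i) * (σ i * t' * σ i) := by
            rw [hv']
            simp [mul_assoc, cs.simple_mul_simple_cancel_left]
          have hstep : BruhatLE cs (a * σ i) (v * σ i) :=
            bruhat_step cs _ hrefl_c hconj (by omega)
          rcases P2 with P2 | P2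
          · exact Or.inl (bruhat_trans cs P2 hstep)
          · exact Or.inr (bruhat_trans cs P2 hstep)
  · -- Z : ascent case
    intro i hasc u hu
    by_cases hus : ℓ (u * σ i) < ℓ u
    · have h1 : BruhatLE cs (u * σ i) u :=
        bruhat_descent cs (cs.isReflection_simple i) hus
      have h2 : BruhatLE cs v (v * σ i) := bruhat_ascent_simple cs i hasc
      exact bruhat_trans cs (bruhat_trans cs h1 hu) h2
    · rcases Relation.ReflTransGen.cases_tail hu with rfl | ⟨a, hua, ⟨⟨t', ht', hv'⟩, hlen⟩⟩
      · exact bruhat_refl cs _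
      · rcases cs.length_mul_simple a i with hasc_a | hdes_a
        · -- ascent at a
          have hZ := (IH (ℓ a) (by omega) a rfl).2 i (by omega) u hua
          have hrefl_c : cs.IsReflection (σ i * t' * σ i) := by
            have := ht'.conj (σ i)
            rwa [cs.inv_simple] at this
          have hconj : v * σ i = (a * σ i) * (σ i * t' * σ i) := by
            rw [hv']
            simp [mul_assoc, cs.simple_mul_simple_cancel_left]
          have hstep : BruhatLE cs (a * σ i) (v * σ i) :=
            bruhat_step cs _ hrefl_c hconj (by omega)
          exact bruhat_trans cs hZ hstep
        · -- descent at a : Φ at a gives u s ≤ a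
          have hΦ := (IH (ℓ a) (by omega) a rfl).1 i (by omega) u hua
          have hstepav : BruhatLE cs a v := bruhat_step cs t' ht' hv' hlen
          have h2 : BruhatLE cs v (v * σ i) := bruhat_ascent_simple cs i hasc
          exact bruhat_trans cs (bruhat_trans cs hΦ.1 hstepav) h2

/-- If `u ≤ v` and `ℓ(v) < ℓ(vs)` then `us ≤ vs`. -/
lemma bruhat_lift_ascent {u v : W} (i : B) (hu : BruhatLE cs u v)
    (hasc : ℓ v < ℓ (v * σ i)) : BruhatLE cs (u * σ i) (v * σ i) :=
  (bruhat_main cs (ℓ v) v rfl).2 i hasc u hu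


/-! ### Lemmas about the twisting automorphism -/

section Twist

variable (f : W → W)

lemma f_one (hmul : ∀ u v : W, f (u * v) = f u * f v) : f 1 = 1 := by
  have h : f 1 * f 1 = f 1 * 1 := by
    rw [← hmul, one_mul, mul_one]
  exact mul_left_cancel h

lemma f_inv (hmul : ∀ u v : W, f (u * v) = f u * f v) (w : W) :
    f w⁻¹ = (f w)⁻¹ := by
  apply eq_inv_of_mul_eq_one_left
  rw [← hmul, inv_mul_cancel, f_one f hmul]

lemma f_wordProd (hmul : ∀ u v : W, f (u * v) = f u * f v)
    (hgen : ∀ i : B, ∃ j : B, f (cs.simple i) = cs.simple j) (ω : List B) :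
    f (π ω) = π (ω.map (fun i => Classical.choose (hgen i))) := by
  induction ω with
  | nil => simpa using f_one f hmul
  | cons i ω ih =>
    rw [wordProd_cons, hmul, ih, List.map_cons, wordProd_cons]
    exact congrArg (· * cs.wordProd (ω.map fun i => Classical.choose (hgen i)))
      (Classical.choose_spec (hgen i))

lemma f_length (hmul : ∀ u v : W, f (u * v) = f u * f v)
    (hinvol : ∀ w : W, f (f w) = w)
    (hgen : ∀ i : B, ∃ j : B, f (cs.simple i) = cs.simple j) (w : W) :
    ℓ (f w) = ℓ w := by
  have hle : ∀ u : W, ℓ (f u) ≤ ℓ u := by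
    intro u
    obtain ⟨ω, hred, hω⟩ := cs.exists_reduced_word' u
    rw [hω, f_wordProd cs f hmul hgen]
    calc ℓ (π (ω.map (fun i => Classical.choose (hgen i))))
        ≤ (ω.map (fun i => Classical.choose (hgen i))).length := cs.length_wordProd_le _
      _ = ω.length := List.length_map _
      _ = ℓ (π ω) := hred.symm
  have h1 := hle w
  have h2 := hle (f w)
  rw [hinvol w] at h2
  omega

end Twist

/-! ### Twisted involutions and `invStep` -/

section InvStep

variable (f : W → W)

lemma invStep_stall {x : W} {i : B} (h : ℓ (x * σ i) < ℓ x) :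
    invStep cs f x i = x := by
  rw [invStep, if_pos h]

lemma invStep_case2 {x : W} {i : B} (h1 : ¬ ℓ (x * σ i) < ℓ x)
    (h2 : f (σ i) * x = x * σ i) : invStep cs f x i = x * σ i := by
  rw [invStep, if_neg h1, if_pos h2]

lemma invStep_case3 {x : W} {i : B} (h1 : ¬ ℓ (x * σ i) < ℓ x)
    (h2 : ¬ f (σ i) * x = x * σ i) : invStep cs f x i = f (σ i) * x * σ i := by
  rw [invStep, if_neg h1, if_neg h2]

lemma invStep_twisted (hmul : ∀ u v : W, f (u * v) = f u * f v)
    (hinvol : ∀ w : W, f (f w) = w)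
    (hgen : ∀ i : B, ∃ j : B, f (cs.simple i) = cs.simple j)
    {x : W} (hx : x⁻¹ = f x) (i : B) :
    (invStep cs f x i)⁻¹ = f (invStep cs f x i) := by
  obtain ⟨j, hj⟩ := hgen i
  have hj2 : f (σ j) = σ i := by rw [← hj, hinvol]
  by_cases h1 : ℓ (x * σ i) < ℓ x
  · rw [invStep_stall cs f h1]
    exact hx
  · by_cases h2 : f (σ i) * x = x * σ i
    · rw [invStep_case2 cs f h1 h2, mul_inv_rev, cs.inv_simple, hmul, ← hx]
      calc σ i * x⁻¹ = x⁻¹ * (x * σ i) * x⁻¹ := by group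
        _ = x⁻¹ * (f (σ i) * x) * x⁻¹ := by rw [h2]
        _ = x⁻¹ * f (σ i) := by group
    · rw [invStep_case3 cs f h1 h2, hj, mul_inv_rev, mul_inv_rev, cs.inv_simple,
        cs.inv_simple, hmul, hmul, hj, hj2, ← hx]
      group

lemma length_fsimple_mul
    (hmul : ∀ u v : W, f (u * v) = f u * f v)
    (hinvol : ∀ w : W, f (f w) = w)
    (hgen : ∀ i : B, ∃ j : B, f (cs.simple i) = cs.simple j)
    {x : W} (hx : x⁻¹ = f x) (i : B) :
    ℓ (f (σ i) * x) = ℓ (x * σ i) := by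
  have h1 : ℓ (f (f (σ i) * x)) = ℓ (f (σ i) * x) :=
    f_length cs f hmul hinvol hgen _
  rw [hmul, hinvol, ← hx] at h1
  rw [← h1, ← cs.length_inv, mul_inv_rev, inv_inv, cs.inv_simple]

/-- The key length lemma for twisted involutions: in "case 3",
`ℓ(σ(s) x s) = ℓ(x) + 2`. -/
lemma length_case3
    (hmul : ∀ u v : W, f (u * v) = f u * f v)
    (hinvol : ∀ w : W, f (f w) = w)
    (hgen : ∀ i : B, ∃ j : B, f (cs.simple i) = cs.simple j)
    {x : W} (hx : x⁻¹ = f x) {i : B}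
    (hs : ℓ x < ℓ (x * σ i)) (h3 : f (σ i) * x ≠ x * σ i) :
    ℓ (f (σ i) * x * σ i) = ℓ x + 2 := by
  obtain ⟨j, hj⟩ := hgen i
  have h5 : ℓ (x * σ i) = ℓ x + 1 := by
    rcases cs.length_mul_simple x i with h | h <;> omega
  have h6 : ℓ (f (σ i) * x) = ℓ x + 1 := by
    rw [length_fsimple_mul cs f hmul hinvol hgen hx i, h5]
  have h7 : ¬ ℓ (f (σ i) * (x * σ i)) < ℓ (x * σ i) := by
    intro hcon
    obtain ⟨ωx, hred, hωx⟩ := cs.exists_reduced_word' x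
    have hπ : π (ωx ++ [i]) = x * σ i := by
      rw [wordProd_append, wordProd_singleton, ← hωx]
    have hrefl : cs.IsReflection (f (σ i)) := by
      rw [hj]
      exact cs.isReflection_simple j
    have hcon' : ℓ (f (σ i) * π (ωx ++ [i])) < ℓ (π (ωx ++ [i])) := by
      rw [hπ]
      exact hcon
    obtain ⟨k, hk, hEk⟩ := strong_exchange_left cs (ωx ++ [i]) hrefl hcon'
    rw [hπ] at hEk
    rw [List.length_append, List.length_singleton] at hk
    have hlenx : ωx.length = ℓ x := by
      rw [hωx]
      exact hred.symm
    rcases Nat.lt_or_ge k ωx.length with hklt | hkge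
    · rw [List.eraseIdx_append_of_lt_length hklt] at hEk
      have hEk2 : f (σ i) * x = π (ωx.eraseIdx k) := by
        have h' := congrArg (fun z => z * σ i) hEk
        rw [wordProd_append, wordProd_singleton] at h'
        rw [cs.simple_mul_simple_cancel_right] at h'
        rw [mul_assoc (f (σ i)) (x * σ i) (σ i), cs.simple_mul_simple_cancel_right] at h'
        exact h'
      have hle : ℓ (f (σ i) * x) ≤ (ωx.eraseIdx k).length := by
        rw [hEk2]
        exact cs.length_wordProd_le _
      rw [List.length_eraseIdx_of_lt hklt] at hle
      omega
    · have hkeq : k = ωx.length := by omega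
      rw [hkeq, List.eraseIdx_append_of_length_le (le_refl _)] at hEk
      simp only [Nat.sub_self, List.eraseIdx_zero, List.tail_cons, List.append_nil] at hEk
      rw [← hωx] at hEk
      apply h3
      have h' := congrArg (fun z => z * σ i) hEk
      rw [mul_assoc (f (σ i)) (x * σ i) (σ i), cs.simple_mul_simple_cancel_right] at h'
      exact h'
  have h8 : ℓ (f (σ i) * (x * σ i)) ≠ ℓ (x * σ i) := by
    rw [hj]
    exact cs.length_simple_mul_ne _ j
  have h9 := cs.length_simple_mul (x * σ i) j
  rw [← hj] at h9
  rw [mul_assoc]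
  omega

end InvStep

/-! ### Non-stalling words -/

section NS

variable (f : W → W)

/-- `NS cs f x l` : applying `l` to `x` never stalls (every step is an ascent). -/
def NS : W → List B → Prop
  | _, [] => True
  | x, i :: l => cs.length x < cs.length (x * cs.simple i) ∧ NS (invStep cs f x i) l

@[simp] lemma ns_nil (x : W) : NS cs f x [] := trivial

lemma ns_cons {x : W} {i : B} {l : List B} :
    NS cs f x (i :: l) ↔
      (ℓ x < ℓ (x * σ i) ∧ NS cs f (invStep cs f x i) l) := Iff.rfl

@[simp] lemma invWord_nil (x : W) : invWord cs f x [] = x := rfl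

lemma invWord_cons (x : W) (i : B) (l : List B) :
    invWord cs f x (i :: l) = invWord cs f (invStep cs f x i) l := rfl

lemma invWord_append (x : W) (l₁ l₂ : List B) :
    invWord cs f x (l₁ ++ l₂) = invWord cs f (invWord cs f x l₁) l₂ :=
  List.foldl_append

lemma ns_append {l₁ l₂ : List B} {x : W} :
    NS cs f x (l₁ ++ l₂) ↔ (NS cs f x l₁ ∧ NS cs f (invWord cs f x l₁) l₂) := by
  induction l₁ generalizing x with
  | nil => simp
  | cons i l₁ ih =>
    rw [List.cons_append, ns_cons, ns_cons, ih, invWord_cons, and_assoc]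

lemma invWord_twisted
    (hmul : ∀ u v : W, f (u * v) = f u * f v)
    (hinvol : ∀ w : W, f (f w) = w)
    (hgen : ∀ i : B, ∃ j : B, f (cs.simple i) = cs.simple j) :
    ∀ (l : List B) (x : W), x⁻¹ = f x → (invWord cs f x l)⁻¹ = f (invWord cs f x l) := by
  intro l
  induction l with
  | nil => intro x hx; exact hx
  | cons i l ih =>
    intro x hx
    rw [invWord_cons]
    exact ih _ (invStep_twisted cs f hmul hinvol hgen hx i)

/-- Lengths add along non-stalling words. -/
lemma ns_length_add
    (hmul : ∀ u v : W, f (u * v) = f u * f v)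
    (hinvol : ∀ w : W, f (f w) = w)
    (hgen : ∀ i : B, ∃ j : B, f (cs.simple i) = cs.simple j) :
    ∀ (l : List B) (x : W), x⁻¹ = f x → NS cs f x l →
      ℓ (x * π l) = ℓ x + l.length := by
  intro l
  induction l with
  | nil => intro x _ _; simp
  | cons i l ih =>
    intro x hx hNS
    obtain ⟨h1, h2⟩ := (ns_cons cs f).mp hNS
    have h1' : ¬ ℓ (x * σ i) < ℓ x := by omega
    have hxπ : x * π (i :: l) = (x * σ i) * π l := by
      rw [wordProd_cons, mul_assoc]
    have hstep_tw := invStep_twisted cs f hmul hinvol hgen hx i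
    have h5 : ℓ (x * σ i) = ℓ x + 1 := by
      rcases cs.length_mul_simple x i with h | h <;> omega
    by_cases h2c : f (σ i) * x = x * σ i
    · rw [invStep_case2 cs f h1' h2c] at h2 hstep_tw
      have := ih (x * σ i) hstep_tw h2
      rw [hxπ, this, h5, List.length_cons]
      omega
    · rw [invStep_case3 cs f h1' h2c] at h2 hstep_tw
      have hlen3 : ℓ (f (σ i) * x * σ i) = ℓ x + 2 :=
        length_case3 cs f hmul hinvol hgen hx h1 h2c
      have hIH := ih (f (σ i) * x * σ i) hstep_tw h2
      rw [hlen3] at hIH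
      -- x * π (i::l) = x σ i π l ; and f(σ i) * (x σ i π l) = (f σ i x σ i) * π l
      obtain ⟨j, hj⟩ := hgen i
      have hup : f (σ i) * (x * σ i * π l) = (f (σ i) * x * σ i) * π l := by
        group
      have hbound1 : ℓ (x * σ i * π l) ≤ ℓ x + 1 + l.length := by
        calc ℓ (x * σ i * π l) ≤ ℓ (x * σ i) + ℓ (π l) := cs.length_mul_le _ _
          _ ≤ ℓ x + 1 + l.length := by
              have := cs.length_wordProd_le l
              omega
      have hbound2 : ℓ x + 2 + l.length ≤ ℓ (x * σ i * π l) + 1 := by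
        have hd := cs.length_simple_mul (x * σ i * π l) j
        rw [← hj, hup, hIH] at hd
        omega
      rw [hxπ, List.length_cons]
      omega

/-- A word that stalls somewhere can be shortened without changing `invWord`. -/
lemma not_ns_shorten :
    ∀ (l : List B) (x : W), ¬ NS cs f x l →
      ∃ m : List B, m.length + 1 = l.length ∧ invWord cs f x m = invWord cs f x l := by
  intro l
  induction l with
  | nil => intro x h; exact absurd (ns_nil cs f x) h
  | cons i l ih =>
    intro x h
    by_cases h1 : ℓ x < ℓ (x * σ i)
    · have h2 : ¬ NS cs f (invStep cs f x i) l := by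
        intro hc
        exact h ((ns_cons cs f).mpr ⟨h1, hc⟩)
      obtain ⟨m, hm1, hm2⟩ := ih (invStep cs f x i) h2
      exact ⟨i :: m, by simp [hm1], by rw [invWord_cons, invWord_cons, hm2]⟩
    · have h1' : ℓ (x * σ i) < ℓ x := by
        have := cs.length_mul_simple_ne x i
        omega
      refine ⟨l, by simp, ?_⟩
      rw [invWord_cons, invStep_stall cs f h1']

/-- Any word computing `y` from `x` yields a Hecke atom of at most its length. -/
lemma exists_heckeatom
    (hmul : ∀ u v : W, f (u * v) = f u * f v)
    (hinvol : ∀ w : W, f (f w) = w)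
    (hgen : ∀ i : B, ∃ j : B, f (cs.simple i) = cs.simple j) :
    ∀ (n : ℕ) (l : List B), l.length ≤ n → ∀ x : W, x⁻¹ = f x →
      ∃ v ∈ HeckeAtoms cs f x (invWord cs f x l), ℓ v ≤ l.length := by
  intro n
  induction n with
  | zero =>
    intro l hl x hx
    have hnil : l = [] := List.length_eq_zero_iff.mp (by omega)
    subst hnil
    exact ⟨1, ⟨[], by simp, by simp [CoxeterSystem.IsReduced], rfl⟩, by simp⟩
  | succ n ih =>
    intro l hl x hx
    by_cases hNS : NS cs f x l
    · have hadd := ns_length_add cs f hmul hinvol hgen l x hx hNS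
      have hred : cs.IsReduced l := by
        have hb1 : ℓ (x * π l) ≤ ℓ x + ℓ (π l) := cs.length_mul_le _ _
        have hb2 := cs.length_wordProd_le l
        unfold CoxeterSystem.IsReduced
        omega
      exact ⟨π l, ⟨l, rfl, hred, rfl⟩, cs.length_wordProd_le l⟩
    · obtain ⟨m, hm1, hm2⟩ := not_ns_shorten cs f l x hNS
      obtain ⟨v, hv1, hv2⟩ := ih m (by omega) x hx
      rw [hm2] at hv1
      exact ⟨v, hv1, by omega⟩

/-- The main chain construction: along a non-stalling word,
`f(πl) ⋅ invWord x l ≤ x ⋅ πl` in Bruhat order. -/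
lemma main_chain
    (hmul : ∀ u v : W, f (u * v) = f u * f v)
    (hinvol : ∀ w : W, f (f w) = w)
    (hgen : ∀ i : B, ∃ j : B, f (cs.simple i) = cs.simple j)
    (l : List B) (x : W) (hx : x⁻¹ = f x) (hNS : NS cs f x l) :
    BruhatLE cs (f (π l) * invWord cs f x l) (x * π l) := by
  induction l using List.reverseRecOn with
  | nil =>
    simp only [wordProd_nil, invWord_nil, mul_one]
    rw [f_one f hmul, one_mul]
    exact bruhat_refl cs x
  | append_singleton l i ih =>
    obtain ⟨hNS1, hNS2⟩ := (ns_append cs f).mp hNS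
    set y' := invWord cs f x l with hy'def
    obtain ⟨hstep, -⟩ := (ns_cons cs f).mp hNS2
    have hy' : y'⁻¹ = f y' := invWord_twisted cs f hmul hinvol hgen l x hx
    have hu := ih hNS1
    have hz1 : ℓ (x * π l) = ℓ x + l.length :=
      ns_length_add cs f hmul hinvol hgen l x hx hNS1
    have hz2 : ℓ (x * π (l ++ [i])) = ℓ x + l.length + 1 := by
      have h := ns_length_add cs f hmul hinvol hgen (l ++ [i]) x hx hNS
      rw [List.length_append, List.length_singleton] at h
      omega
    have hxsplit : x * π (l ++ [i]) = (x * π l) * σ i := by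
      rw [wordProd_append, wordProd_singleton, mul_assoc]
    have hasc : ℓ (x * π l) < ℓ ((x * π l) * σ i) := by
      rw [← hxsplit, hz1, hz2]
      omega
    have hinvw : invWord cs f x (l ++ [i]) = invStep cs f y' i := by
      rw [invWord_append]
      rfl
    have hfπ : f (π (l ++ [i])) = f (π l) * f (σ i) := by
      rw [wordProd_append, wordProd_singleton, hmul]
    have hstep' : ¬ ℓ (y' * σ i) < ℓ y' := by omega
    obtain ⟨j, hj⟩ := hgen i
    by_cases h2 : f (σ i) * y' = y' * σ i
    · -- case 2
      have hval : invWord cs f x (l ++ [i]) = y' * σ i := by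
        rw [hinvw, invStep_case2 cs f hstep' h2]
      rw [hval, hfπ, hxsplit]
      have hLHS : f (π l) * f (σ i) * (y' * σ i) = f (π l) * y' := by
        rw [mul_assoc (f (π l)), ← mul_assoc (f (σ i)), h2, mul_assoc, cs.simple_mul_simple_self,
          mul_one]
      rw [hLHS]
      exact bruhat_trans cs hu (bruhat_ascent_simple cs i hasc)
    · -- case 3
      have hval : invWord cs f x (l ++ [i]) = f (σ i) * y' * σ i := by
        rw [hinvw, invStep_case3 cs f hstep' h2]
      rw [hval, hfπ, hxsplit]
      have hff : f (σ i) * f (σ i) = 1 := by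
        rw [hj, cs.simple_mul_simple_self]
      have hLHS : f (π l) * f (σ i) * (f (σ i) * y' * σ i) = (f (π l) * y') * σ i := by
        rw [mul_assoc (f (π l)), ← mul_assoc (f (σ i)), ← mul_assoc (f (σ i)), hff, one_mul,
          mul_assoc]
      rw [hLHS]
      exact bruhat_lift_ascent cs i hu hasc

end NS

end AtomsBruhatAux

/-- Every atom `w ∈ A_*(x, y)` satisfies `w* y ≤ x w` in Bruhat order. -/
theorem atoms_subset_bruhat
    (cs : CoxeterSystem M W) (σ : W → W)
    (hmul : ∀ u v : W, σ (u * v) = σ u * σ v)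
    (hinvol : ∀ w : W, σ (σ w) = w)
    (hgen : ∀ i : B, ∃ j : B, σ (cs.simple i) = cs.simple j)
    (x y : W) (hx : x⁻¹ = σ x) (hy : y⁻¹ = σ y) :
    Atoms cs σ x y ⊆ {w : W | BruhatLE cs (σ w * y) (x * w)} := by
  intro w hw
  obtain ⟨⟨l, hπ, hred, hinv⟩, hmin⟩ := hw
  have hNS : AtomsBruhatAux.NS cs σ x l := by
    by_contra hns
    obtain ⟨m, hm1, hm2⟩ := AtomsBruhatAux.not_ns_shorten cs σ l x hns
    obtain ⟨v, hv1, hv2⟩ :=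
      AtomsBruhatAux.exists_heckeatom cs σ hmul hinvol hgen m.length m (le_refl _) x hx
    rw [hm2, hinv] at hv1
    have hwlen : cs.length w = l.length := by
      rw [← hπ]
      exact hred
    have := hmin v hv1
    omega
  have hmain := AtomsBruhatAux.main_chain cs σ hmul hinvol hgen l x hx hNS
  rw [hπ, hinv] at hmain
  exact hmain
end

section
/- Let (W,S,*) be a twisted Coxeter system with W finite and longest element w₀. Then B_*(1, w₀) = {w ∈ W : w* w₀ ≤ w}, where ≤ is the Bruhat order; that is, the set of Hecke atoms of w₀ consists exactly of the elements w ∈ W with w* w₀ ≤ w. -/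
open CoxeterSystem
open scoped Classical

variable {B W : Type*} [Group W] {M : CoxeterMatrix B}

namespace HeckeAux

variable (cs : CoxeterSystem M W)

local prefix:100 "ℓ" => cs.length
local prefix:100 "π" => cs.wordProd

/-- The standard action of a simple generator on `W × ZMod 2` used to define the
reflection-parity representation. -/
noncomputable def eFun (i : B) : W × ZMod 2 → W × ZMod 2 :=
  fun p => (cs.simple i * p.1 * cs.simple i, p.2 + if p.1 = cs.simple i then 1 else 0)

lemma eFun_invol (i : B) : Function.Involutive (eFun cs i) := by
  rintro ⟨t, z⟩
  simp only [eFun, Prod.mk.injEq]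
  have h1 : cs.simple i * (cs.simple i * t * cs.simple i) * cs.simple i = t := by
    rw [← mul_assoc, ← mul_assoc, cs.simple_mul_simple_self, one_mul, mul_assoc,
      cs.simple_mul_simple_self, mul_one]
  refine ⟨h1, ?_⟩
  have h2 : (cs.simple i * t * cs.simple i = cs.simple i) ↔ (t = cs.simple i) := by
    constructor
    · intro h
      have := congrArg (fun x => cs.simple i * x * cs.simple i) h
      simpa [h1, ← mul_assoc, cs.simple_mul_simple_self] using this
    · rintro rfl; rw [cs.simple_mul_simple_self, one_mul]
  simp only [h2]
  rcases eq_or_ne t (cs.simple i) with h | h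
  · rw [if_pos h, add_assoc]
    norm_num
    decide
  · rw [if_neg h, add_zero, add_zero]

/-- The action of a simple generator as a permutation. -/
noncomputable def ePerm (i : B) : Equiv.Perm (W × ZMod 2) :=
  (eFun_invol cs i).toPerm

lemma ePerm_apply (i : B) (t : W) (z : ZMod 2) :
    ePerm cs i (t, z) = (cs.simple i * t * cs.simple i,
      z + if t = cs.simple i then 1 else 0) := rfl

/-- Applying a product of the generator permutations computes conjugation together with
the count of the element in the right inversion sequence. -/
lemma prod_map_ePerm (ω : List B) (t : W) (z : ZMod 2) :
    (List.prod (ω.map (ePerm cs))) (t, z) =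
      (π ω * t * (π ω)⁻¹, z + ((cs.rightInvSeq ω).count t : ZMod 2)) := by
  induction ω generalizing t z with
  | nil => simp [cs.wordProd_nil]
  | cons j ω ih =>
    rw [List.map_cons, List.prod_cons, Equiv.Perm.mul_apply, ih, ePerm_apply,
      cs.wordProd_cons, rightInvSeq]
    have hcond : (π ω * t * (π ω)⁻¹ = cs.simple j) ↔ ((π ω)⁻¹ * cs.simple j * π ω = t) := by
      constructor
      · intro h; rw [← h]; group
      · intro h; rw [← h]; group
    rw [List.count_cons]
    refine Prod.ext ?_ ?_
    · show cs.simple j * (π ω * t * (π ω)⁻¹) * cs.simple j =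
        cs.simple j * π ω * t * (cs.simple j * π ω)⁻¹
      rw [mul_inv_rev, cs.inv_simple]
      group
    · show z + ((cs.rightInvSeq ω).count t : ZMod 2) +
        (if π ω * t * (π ω)⁻¹ = cs.simple j then 1 else 0) = _
      simp only [beq_iff_eq]
      rcases eq_or_ne ((π ω)⁻¹ * cs.simple j * π ω) t with h | h
      · rw [if_pos (hcond.mpr h), if_pos h]
        push_cast; ring
      · rw [if_neg (fun hc => h (hcond.mp hc)), if_neg h]
        push_cast; ring


lemma ris_append (a b : List B) :
    cs.rightInvSeq (a ++ b) =
      (cs.rightInvSeq a).map (fun y => (π b)⁻¹ * y * π b) ++ cs.rightInvSeq b := by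
  induction a with
  | nil => simp [rightInvSeq]
  | cons x a ih =>
    rw [List.cons_append, rightInvSeq, rightInvSeq, ih, cs.wordProd_append]
    simp only [List.map_cons, List.cons_append, mul_inv_rev]
    congr 1
    group

lemma count_ris_append (a b : List B) (t : W) :
    (cs.rightInvSeq (a ++ b)).count t =
      (cs.rightInvSeq a).count (π b * t * (π b)⁻¹) + (cs.rightInvSeq b).count t := by
  rw [ris_append, List.count_append]
  congr 1
  have hinj : Function.Injective (fun y : W => (π b)⁻¹ * y * π b) := by
    intro y z h
    simpa using mul_left_cancel (mul_right_cancel h)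
  rw [← List.count_map_of_injective _ _ hinj (π b * t * (π b)⁻¹)]
  congr 1
  group

lemma alt_drop (i j : B) : ∀ (k n : ℕ),
    (alternatingWord i j n).drop k = alternatingWord i j (n - k) := by
  intro k
  induction k with
  | zero => simp
  | succ k ih =>
    intro n
    cases n with
    | zero => simp [alternatingWord]
    | succ n =>
      rw [alternatingWord_succ' i j n, List.drop_succ_cons, ih n]
      congr 1
      omega

lemma alt_getElem? (i j : B) (n k : ℕ) (hk : k < n) :
    (alternatingWord i j n)[k]? = some (if Even (n - k) then i else j) := by
  have h1 : (alternatingWord i j n)[k]? = ((alternatingWord i j n).drop k)[0]? := by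
    rw [List.getElem?_drop, Nat.add_zero]
  rw [h1, alt_drop]
  obtain ⟨r, hr⟩ : ∃ r, n - k = r + 1 := ⟨n - k - 1, by omega⟩
  rw [hr, alternatingWord_succ' i j r]
  simp only [List.getElem?_cons_zero]
  rw [if_congr Nat.even_add_one rfl rfl, ite_not]

section Dihedral
variable (i j : B)

lemma simple_conj_pow (b : ℕ) :
    cs.simple j * ((cs.simple i * cs.simple j) ^ b) * cs.simple j
      = ((cs.simple i * cs.simple j) ^ b)⁻¹ := by
  have hp1 : cs.simple j * (cs.simple i * cs.simple j) * cs.simple j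
      = (cs.simple i * cs.simple j)⁻¹ := by
    rw [mul_inv_rev, cs.inv_simple, cs.inv_simple]
    simp only [mul_assoc, cs.simple_mul_simple_self, mul_one]
  induction b with
  | zero => simp
  | succ b ih =>
    calc cs.simple j * (cs.simple i * cs.simple j) ^ (b+1) * cs.simple j
        = (cs.simple j * (cs.simple i * cs.simple j) ^ b * cs.simple j)
            * (cs.simple j * (cs.simple i * cs.simple j) * cs.simple j) := by
          rw [pow_succ]
          simp only [mul_assoc, cs.simple_mul_simple_cancel_left]
      _ = ((cs.simple i * cs.simple j) ^ b)⁻¹ * (cs.simple i * cs.simple j)⁻¹ := by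
          rw [ih, hp1]
      _ = ((cs.simple i * cs.simple j) ^ (b+1))⁻¹ := by
          rw [pow_succ', mul_inv_rev, mul_inv_rev]
          rw [mul_inv_rev]

lemma simple_conj_pow' (b : ℕ) :
    cs.simple j * ((cs.simple i * cs.simple j) ^ b)⁻¹ * cs.simple j
      = (cs.simple i * cs.simple j) ^ b := by
  have h := congrArg (fun x => x⁻¹) (simple_conj_pow cs i j b)
  simp only [mul_inv_rev, cs.inv_simple, inv_inv] at h
  rw [mul_assoc]
  calc cs.simple j * (((cs.simple i * cs.simple j) ^ b)⁻¹ * cs.simple j)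
      = cs.simple j * (((cs.simple i * cs.simple j) ^ b)⁻¹ * cs.simple j) := rfl
    _ = (cs.simple i * cs.simple j) ^ b := by
        rw [← mul_assoc]
        rw [← mul_assoc] at h
        exact h

lemma conj_pow_key (a b : ℕ) :
    ((cs.simple i * cs.simple j) ^ b)⁻¹
      * (cs.simple j * (cs.simple i * cs.simple j) ^ a)
      * (cs.simple i * cs.simple j) ^ b
    = cs.simple j * (cs.simple i * cs.simple j) ^ (a + 2*b) := by
  have h1 : ((cs.simple i * cs.simple j) ^ b)⁻¹
      * (cs.simple j * (cs.simple i * cs.simple j) ^ a)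
      * (cs.simple i * cs.simple j) ^ b
    = cs.simple j * (cs.simple j * ((cs.simple i * cs.simple j) ^ b)⁻¹ * cs.simple j)
        * ((cs.simple i * cs.simple j) ^ a * (cs.simple i * cs.simple j) ^ b) := by
    simp only [mul_assoc, cs.simple_mul_simple_cancel_left]
  rw [h1, simple_conj_pow']
  rw [mul_assoc, ← pow_add, ← pow_add]
  congr 2
  omega

lemma conj_pow_key0 (b : ℕ) :
    ((cs.simple i * cs.simple j) ^ b)⁻¹ * cs.simple j * (cs.simple i * cs.simple j) ^ b
    = cs.simple j * (cs.simple i * cs.simple j) ^ (2*b) := by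
  have h := conj_pow_key cs i j 0 b
  simpa using h

lemma entry_alt (m k : ℕ) (hk : k < 2*m) :
    (cs.rightInvSeq (alternatingWord i j (2*m))).getD k 1
      = cs.simple j * (cs.simple i * cs.simple j) ^ (2*m - k - 1) := by
  rw [cs.getD_rightInvSeq, alt_drop, alt_getElem? i j _ k hk]
  have hlet : 2*m - (k+1) = 2*m - k - 1 := by omega
  rw [hlet, prod_alternatingWord_eq_mul_pow]
  set n := 2*m - k - 1 with hn
  simp only [Option.map_some, Option.getD_some]
  rcases Nat.even_or_odd k with hk2 | hk2
  · -- k even: 2m - k even, n odd, letter = i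
    have h1 : Even (2*m - k) := by
      rcases hk2 with ⟨c, hc⟩
      exact ⟨m - c, by omega⟩
    have hnodd : n % 2 = 1 := by
      rcases h1 with ⟨c, hc⟩
      omega
    have h2 : ¬ Even n := by
      rw [Nat.even_iff]
      omega
    rw [if_pos h1, if_neg h2]
    have h4 : (cs.simple j * (cs.simple i * cs.simple j) ^ (n / 2))⁻¹ * cs.simple i
        * (cs.simple j * (cs.simple i * cs.simple j) ^ (n / 2))
        = ((cs.simple i * cs.simple j) ^ (n / 2))⁻¹
          * (cs.simple j * (cs.simple i * cs.simple j) ^ 1)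
          * (cs.simple i * cs.simple j) ^ (n / 2) := by
      rw [mul_inv_rev, cs.inv_simple, pow_one]
      simp only [mul_assoc]
    rw [h4, conj_pow_key]
    congr 2
    omega
  · -- k odd: 2m - k odd, n even, letter = j
    have h1 : ¬ Even (2*m - k) := by
      rw [Nat.even_iff]
      rcases hk2 with ⟨c, hc⟩
      omega
    have hnev : n % 2 = 0 := by
      rcases hk2 with ⟨c, hc⟩
      omega
    have h2 : Even n := Nat.even_iff.mpr hnev
    rw [if_neg h1, if_pos h2, one_mul]
    rw [conj_pow_key0]
    congr 2
    omega

lemma count_ris_alt_even (m : ℕ) (hpm : (cs.simple i * cs.simple j) ^ m = 1) (t : W) :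
    ((cs.rightInvSeq (alternatingWord i j (2*m))).count t : ZMod 2) = 0 := by
  set L := cs.rightInvSeq (alternatingWord i j (2*m)) with hL
  have hlen : L.length = 2*m := by
    rw [hL, cs.length_rightInvSeq, length_alternatingWord]
  have htd : L.take m = L.drop m := by
    apply List.ext_getElem
    · simp [hlen]; omega
    · intro k h1 h2
      rw [List.getElem_take, List.getElem_drop]
      have hk : k < m := by
        rw [List.length_take, hlen] at h1
        omega
      have e1 : L[k] = L.getD k 1 := by
        rw [List.getD_eq_getElem _ _ (by omega : k < L.length)]
      have e2 : L[m+k] = L.getD (m+k) 1 := by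
        rw [List.getD_eq_getElem _ _ (by omega : m+k < L.length)]
      rw [e1, e2, hL, entry_alt cs i j m k (by omega), entry_alt cs i j m (m+k) (by omega)]
      have harith : 2*m - k - 1 = (2*m - (m+k) - 1) + m := by omega
      rw [harith, pow_add, hpm, mul_one]
  have hsplit : L = L.take m ++ L.drop m := (List.take_append_drop m L).symm
  have : L.count t = (L.take m).count t + (L.take m).count t := by
    conv_lhs => rw [hsplit]
    rw [List.count_append, htd]
  rw [this]
  push_cast
  rw [← two_mul]
  have h2 : (2 : ZMod 2) = 0 := by decide
  rw [h2, zero_mul]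

end Dihedral


lemma prod_map_ePerm_alt (i j : B) (m : ℕ) :
    ((alternatingWord i j (2*m)).map (ePerm cs)).prod = (ePerm cs i * ePerm cs j) ^ m := by
  induction m with
  | zero => simp [alternatingWord]
  | succ m ih =>
    have h1 : alternatingWord i j (2*(m+1)) = i :: j :: alternatingWord i j (2*m) := by
      have e1 : 2*(m+1) = (2*m+1)+1 := by omega
      rw [e1, alternatingWord_succ' i j (2*m+1), alternatingWord_succ' i j (2*m)]
      rw [if_neg (by simp [Nat.even_iff]), if_pos (by simp [Nat.even_iff])]
    rw [h1, List.map_cons, List.map_cons, List.prod_cons, List.prod_cons, ih,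
      pow_succ', ← mul_assoc]

lemma ePerm_liftable : M.IsLiftable (ePerm cs) := by
  intro i j
  have h1 : (ePerm cs i * ePerm cs j) ^ M i j
      = ((alternatingWord i j (2 * M i j)).map (ePerm cs)).prod := by
    rw [prod_map_ePerm_alt]
  rw [h1]
  apply Equiv.ext
  rintro ⟨t, z⟩
  rw [prod_map_ePerm]
  have h2 : cs.wordProd (alternatingWord i j (2 * M i j)) = 1 := by
    rw [prod_alternatingWord_eq_mul_pow, if_pos (even_two_mul _)]
    have : 2 * M i j / 2 = M i j := by omega
    rw [this, one_mul, cs.simple_mul_simple_pow]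
  rw [h2, count_ris_alt_even cs i j (M i j) (cs.simple_mul_simple_pow i j)]
  simp

/-- The reflection-parity representation of `W`. -/
noncomputable def phi : W →* Equiv.Perm (W × ZMod 2) :=
  cs.lift ⟨ePerm cs, ePerm_liftable cs⟩

lemma phi_simple (i : B) : phi cs (cs.simple i) = ePerm cs i :=
  cs.lift_apply_simple (ePerm_liftable cs) i

lemma phi_wordProd (ω : List B) : phi cs (π ω) = (ω.map (ePerm cs)).prod := by
  unfold CoxeterSystem.wordProd
  rw [map_list_prod, List.map_map]
  congr 1
  apply List.map_congr_left
  intro x _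
  exact phi_simple cs x

/-- The parity of the number of times `t` occurs in the right inversion sequence of
any word for `w`. -/
noncomputable def npar (w t : W) : ZMod 2 := (phi cs w (t, 0)).2

lemma phi_spec (w t : W) (z : ZMod 2) :
    phi cs w (t, z) = (w * t * w⁻¹, z + npar cs w t) := by
  obtain ⟨ω, rfl⟩ := cs.wordProd_surjective w
  rw [phi_wordProd, prod_map_ePerm, npar, phi_wordProd, prod_map_ePerm]
  simp

lemma npar_eq_count (ω : List B) (t : W) :
    npar cs (π ω) t = ((cs.rightInvSeq ω).count t : ZMod 2) := by
  rw [npar, phi_wordProd, prod_map_ePerm]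
  simp

lemma npar_mul (a b t : W) :
    npar cs (a * b) t = npar cs b t + npar cs a (b * t * b⁻¹) := by
  have h1 : phi cs (a * b) (t, 0) = phi cs a (phi cs b (t, 0)) := by
    rw [map_mul]
    rfl
  have h2 := phi_spec cs b t 0
  have h3 := phi_spec cs a (b * t * b⁻¹) (npar cs b t)
  rw [npar, h1, h2, zero_add, h3]

lemma npar_simple (i : B) (t : W) :
    npar cs (cs.simple i) t = if cs.simple i = t then 1 else 0 := by
  have h := npar_eq_count cs [i] t
  simp only [cs.wordProd_singleton] at h
  rw [h]
  have : cs.rightInvSeq [i] = [cs.simple i] := by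
    simp [rightInvSeq]
  rw [this, List.count_singleton]
  rcases eq_or_ne (cs.simple i) t with h2 | h2
  · simp [h2]
  · simp [h2, if_neg (by simpa [beq_iff_eq] using h2)]

lemma npar_reflection_self (t : W) (ht : cs.IsReflection t) : npar cs t t = 1 := by
  obtain ⟨w, i, rfl⟩ := ht
  obtain ⟨κ, rfl⟩ := cs.wordProd_surjective w
  induction κ with
  | nil =>
    simp only [cs.wordProd_nil, one_mul, mul_one, inv_one]
    rw [npar_simple]
    simp
  | cons x κ ih =>
    rw [cs.wordProd_cons]
    set t' := π κ * cs.simple i * (π κ)⁻¹ with ht'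
    have hexp : cs.simple x * π κ * cs.simple i * (cs.simple x * π κ)⁻¹
        = cs.simple x * (t' * cs.simple x) := by
      rw [ht', mul_inv_rev, cs.inv_simple]
      simp only [mul_assoc]
    rw [hexp, npar_mul]
    have e1 : t' * cs.simple x * (cs.simple x * (t' * cs.simple x)) * (t' * cs.simple x)⁻¹
        = t' := by
      rw [mul_inv_rev]
      simp only [mul_assoc, cs.simple_mul_simple_cancel_left]
      group
    rw [e1]
    have ht'refl : t' * t' = 1 := by
      rw [ht']
      simp only [mul_assoc, inv_mul_cancel_left]
      simp only [← mul_assoc, cs.simple_mul_simple_cancel_right]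
      simp [cs.simple_mul_simple_self]
    have e2 : cs.simple x * (cs.simple x * (t' * cs.simple x)) * (cs.simple x)⁻¹ = t' := by
      rw [cs.inv_simple, cs.simple_mul_simple_cancel_left, mul_assoc,
        cs.simple_mul_simple_self, mul_one]
    have e3 : npar cs (t' * cs.simple x) (cs.simple x * (t' * cs.simple x))
        = npar cs (cs.simple x) (cs.simple x * (t' * cs.simple x)) + npar cs t' t' := by
      rw [npar_mul, e2]
    rw [e3, ih, npar_simple, npar_simple]
    have hiff : (cs.simple x = cs.simple x * (t' * cs.simple x)) ↔ (cs.simple x = t') := by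
      constructor
      · intro h
        have h0 : cs.simple x * (1 : W) = cs.simple x * (t' * cs.simple x) := by
          rw [mul_one]; exact h
        have h1 : t' * cs.simple x = 1 := (mul_left_cancel h0).symm
        have h2 : t' = (cs.simple x)⁻¹ := eq_inv_of_mul_eq_one_left h1
        rw [h2, cs.inv_simple]
      · intro h
        rw [← h, cs.simple_mul_simple_cancel_left]
    rcases eq_or_ne (cs.simple x) t' with hc | hc
    · rw [if_pos (hiff.mpr hc), if_pos hc]
      decide
    · rw [if_neg (fun hh => hc (hiff.mp hh)), if_neg hc]
      decide

lemma npar_eq_one_of_inversion {w t : W} (ht : cs.IsReflection t)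
    (hl : ℓ (w * t) < ℓ w) : npar cs w t = 1 := by
  have hw : w = (w * t) * t := by
    rw [mul_assoc, ht.mul_self, mul_one]
  have h2 : npar cs (w * t) t = 0 := by
    obtain ⟨ω, hred, hw'⟩ := cs.exists_reduced_word' (w * t)
    rw [hw', npar_eq_count]
    have hnm : t ∉ cs.rightInvSeq ω := by
      intro hmem
      have hinv := (cs.isRightInversion_of_mem_rightInvSeq hred hmem).2
      rw [← hw'] at hinv
      rw [mul_assoc, ht.mul_self, mul_one] at hinv
      omega
    rw [List.count_eq_zero.mpr hnm]
    simp
  have h3 : npar cs ((w * t) * t) t = npar cs t t + npar cs (w * t) (t * t * t⁻¹) :=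
    npar_mul cs (w * t) t t
  have h4 : t * t * t⁻¹ = t := by rw [ht.mul_self, one_mul, ht.inv]
  rw [← hw, h4, h2, add_zero, npar_reflection_self cs t ht] at h3
  exact h3

lemma strong_exchange_mem {ω : List B} (hred : cs.IsReduced ω) {t : W}
    (ht : cs.IsReflection t) (hl : ℓ (π ω * t) < ℓ (π ω)) : t ∈ cs.rightInvSeq ω := by
  by_contra hmem
  have h0 : npar cs (π ω) t = 1 := npar_eq_one_of_inversion cs ht hl
  rw [npar_eq_count, List.count_eq_zero.mpr hmem] at h0
  simpa using h0.symm

lemma strong_exchange {ω : List B} (hred : cs.IsReduced ω) {t : W}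
    (ht : cs.IsReflection t) (hl : ℓ (π ω * t) < ℓ (π ω)) :
    ∃ j < ω.length, π ω * t = π (ω.eraseIdx j) := by
  have hmem := strong_exchange_mem cs hred ht hl
  obtain ⟨j, hj, hget⟩ := List.mem_iff_getElem.mp hmem
  refine ⟨j, by simpa using hj, ?_⟩
  have h1 := cs.wordProd_mul_getD_rightInvSeq ω j
  rw [List.getD_eq_getElem _ _ hj, hget] at h1
  exact h1

lemma strong_exchange_left {ω : List B} (hred : cs.IsReduced ω) {t : W}
    (ht : cs.IsReflection t) (hl : ℓ (t * π ω) < ℓ (π ω)) :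
    ∃ j < ω.length, t * π ω = π (ω.eraseIdx j) := by
  have hrev : cs.IsReduced ω.reverse := (cs.isReduced_reverse_iff ω).mpr hred
  have hl' : ℓ (π ω.reverse * t) < ℓ (π ω.reverse) := by
    rw [cs.wordProd_reverse]
    have e1 : ℓ ((π ω)⁻¹ * t) = ℓ (t * π ω) := by
      have : ((π ω)⁻¹ * t)⁻¹ = t * π ω := by
        rw [mul_inv_rev, inv_inv, ht.inv]
      rw [← this, cs.length_inv]
    rw [e1, cs.length_inv]
    exact hl
  have hmem := strong_exchange_mem cs hrev ht hl'
  rw [cs.rightInvSeq_reverse, List.mem_reverse] at hmem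
  obtain ⟨j, hj, hget⟩ := List.mem_iff_getElem.mp hmem
  refine ⟨j, by simpa using hj, ?_⟩
  have h1 := cs.getD_leftInvSeq_mul_wordProd ω j
  rw [List.getD_eq_getElem _ _ hj, hget] at h1
  exact h1



section Bruhat

lemma bruhat_length_le {u w : W} (h : BruhatLE cs u w) : ℓ u ≤ ℓ w := by
  induction h with
  | refl => exact le_refl _
  | tail h1 h2 ih => exact ih.trans (le_of_lt h2.2)

lemma bruhat_eq_of_length_ge {u w : W} (h : BruhatLE cs u w) (hl : ℓ w ≤ ℓ u) : u = w := by
  induction h with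
  | refl => rfl
  | @tail b c h1 h2 ih =>
    have := bruhat_length_le cs h1
    have := h2.2
    omega

lemma bruhat_single {u t : W} (ht : cs.IsReflection t) (h : ℓ u < ℓ (u * t)) :
    BruhatLE cs u (u * t) :=
  Relation.ReflTransGen.single ⟨⟨t, ht, rfl⟩, h⟩

lemma bruhat_desc {u t : W} (ht : cs.IsReflection t) (h : ℓ (u * t) < ℓ u) :
    BruhatLE cs (u * t) u := by
  have he : u * t * t = u := by rw [mul_assoc, ht.mul_self, mul_one]
  have := bruhat_single cs (u := u * t) ht (by rw [he]; exact h)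
  rwa [he] at this

lemma bruhat_single_left {u t : W} (ht : cs.IsReflection t) (h : ℓ u < ℓ (t * u)) :
    BruhatLE cs u (t * u) := by
  have he : t * u = u * (u⁻¹ * t * u) := by group
  have hr : cs.IsReflection (u⁻¹ * t * u) := by
    have := ht.conj u⁻¹
    simpa using this
  rw [he]
  exact bruhat_single cs hr (by rw [← he]; exact h)

lemma bruhat_desc_left {u t : W} (ht : cs.IsReflection t) (h : ℓ (t * u) < ℓ u) :
    BruhatLE cs (t * u) u := by
  have he : (t * u) * (u⁻¹ * t * u) = u := by
    have h2 : t * t = 1 := ht.mul_self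
    calc t * u * (u⁻¹ * t * u) = t * (t * u) := by group
    _ = u := by rw [← mul_assoc, h2, one_mul]
  have hr : cs.IsReflection (u⁻¹ * t * u) := by simpa using ht.conj u⁻¹
  have := bruhat_single cs (u := t * u) hr (by rw [he]; exact h)
  rwa [he] at this

lemma bruhat_inv {u w : W} (h : BruhatLE cs u w) : BruhatLE cs u⁻¹ w⁻¹ := by
  induction h with
  | refl => exact Relation.ReflTransGen.refl
  | @tail b c h1 h2 ih =>
    obtain ⟨⟨t, ht, rfl⟩, hlt⟩ := h2
    refine ih.trans ?_
    have he : (b * t)⁻¹ = b⁻¹ * (b * t * b⁻¹) := by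
      rw [mul_inv_rev, ht.inv]
      group
    have hr : cs.IsReflection (b * t * b⁻¹) := ht.conj b
    rw [he]
    apply bruhat_single cs hr
    rw [← he, cs.length_inv, cs.length_inv]
    exact hlt

lemma bruhat_simple_asc {u : W} {i : B} (h : ℓ u < ℓ (u * cs.simple i)) :
    BruhatLE cs u (u * cs.simple i) :=
  bruhat_single cs (cs.isReflection_simple i) h

lemma bruhat_simple_desc {u : W} {i : B} (h : ℓ (u * cs.simple i) < ℓ u) :
    BruhatLE cs (u * cs.simple i) u :=
  bruhat_desc cs (cs.isReflection_simple i) h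

lemma bruhat_simple_asc_left {u : W} {i : B} (h : ℓ u < ℓ (cs.simple i * u)) :
    BruhatLE cs u (cs.simple i * u) :=
  bruhat_single_left cs (cs.isReflection_simple i) h

lemma bruhat_simple_desc_left {u : W} {i : B} (h : ℓ (cs.simple i * u) < ℓ u) :
    BruhatLE cs (cs.simple i * u) u :=
  bruhat_desc_left cs (cs.isReflection_simple i) h

end Bruhat


section Lifting

lemma bruhat_crux {v t : W} (ht : cs.IsReflection t)
    (hlt : ℓ v < ℓ (v * t)) {i : B} (hdz : ℓ (cs.simple i * (v * t)) < ℓ (v * t))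
    (hav : ℓ v < ℓ (cs.simple i * v)) :
    BruhatLE cs (cs.simple i * v) (v * t) ∧ BruhatLE cs v (cs.simple i * (v * t)) := by
  set z := v * t with hz
  obtain ⟨ω', hred', hw'⟩ := cs.exists_reduced_word' (cs.simple i * z)
  have hpz : π (i :: ω') = z := by
    rw [cs.wordProd_cons, ← hw', cs.simple_mul_simple_cancel_left]
  have h1z : 1 ≤ ℓ z := by omega
  have hlsz : ℓ (cs.simple i * z) = ℓ z - 1 := by
    rcases cs.length_simple_mul z i with h | h <;> omega
  have hω'len : ω'.length = ℓ z - 1 := by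
    have h2 : ℓ (π ω') = ω'.length := hred'
    rw [← hw'] at h2
    omega
  have hredω : cs.IsReduced (i :: ω') := by
    show ℓ (π (i :: ω')) = (i :: ω').length
    rw [hpz, List.length_cons]
    omega
  have hzt : z * t = v := by rw [hz, mul_assoc, ht.mul_self, mul_one]
  have hse : ℓ (π (i :: ω') * t) < ℓ (π (i :: ω')) := by
    rw [hpz, hzt]; exact hlt
  obtain ⟨j, hj, herase⟩ := strong_exchange cs hredω ht hse
  rw [hpz, hzt] at herase
  match j, hj with
  | 0, _ =>
    simp only [List.eraseIdx_cons_zero] at herase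
    rw [← hw'] at herase
    constructor
    · rw [herase, cs.simple_mul_simple_cancel_left]
      exact Relation.ReflTransGen.refl
    · rw [herase]
      exact Relation.ReflTransGen.refl
  | (k+1), hj =>
    have hk : k < ω'.length := by simpa using hj
    simp only [List.eraseIdx_cons_succ] at herase
    rw [cs.wordProd_cons] at herase
    have hsiv : cs.simple i * v = π (ω'.eraseIdx k) := by
      rw [herase, cs.simple_mul_simple_cancel_left]
    set t'' := (cs.rightInvSeq ω').getD k 1 with ht''
    have ht''refl : cs.IsReflection t'' := by
      apply cs.isReflection_of_mem_rightInvSeq ω'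
      rw [ht'', List.getD_eq_getElem _ _ (by simpa using hk)]
      exact List.getElem_mem _
    have hprod : (cs.simple i * z) * t'' = π (ω'.eraseIdx k) := by
      rw [hw']
      exact cs.wordProd_mul_getD_rightInvSeq ω' k
    have hld : ℓ (π (ω'.eraseIdx k)) < ℓ (cs.simple i * z) := by
      have h1 : ℓ (π (ω'.eraseIdx k)) ≤ (ω'.eraseIdx k).length := cs.length_wordProd_le _
      have h2 : (ω'.eraseIdx k).length = ω'.length - 1 := by
        rw [List.length_eraseIdx]
        simp [hk]
      have h3 : ω'.length = ℓ (cs.simple i * z) := by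
        rw [hw']; exact hred'.symm
      omega
    have hd1 : BruhatLE cs (π (ω'.eraseIdx k)) (cs.simple i * z) := by
      rw [← hprod]
      apply bruhat_desc cs ht''refl
      rw [hprod]
      exact hld
    have hsz_le_z : BruhatLE cs (cs.simple i * z) z := by
      have := bruhat_simple_asc_left cs (u := cs.simple i * z) (i := i)
        (by rw [cs.simple_mul_simple_cancel_left]; omega)
      rwa [cs.simple_mul_simple_cancel_left] at this
    constructor
    · rw [hsiv]
      exact hd1.trans hsz_le_z
    · have h5 : BruhatLE cs v (cs.simple i * v) := bruhat_simple_asc_left cs hav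
      rw [hsiv] at h5
      exact h5.trans hd1

lemma bruhat_AQZ {u z : W} (h : BruhatLE cs u z) :
    ∀ i : B,
      (ℓ (cs.simple i * z) < ℓ z → ℓ u < ℓ (cs.simple i * u) →
        BruhatLE cs (cs.simple i * u) z)
    ∧ (ℓ z < ℓ (cs.simple i * z) → ℓ u < ℓ (cs.simple i * u) →
        BruhatLE cs (cs.simple i * u) (cs.simple i * z))
    ∧ (ℓ (cs.simple i * z) < ℓ z → ℓ u < ℓ (cs.simple i * u) →
        BruhatLE cs u (cs.simple i * z)) := by
  induction h with
  | refl =>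
    intro i
    exact ⟨fun h1 h2 => by omega, fun _ _ => Relation.ReflTransGen.refl,
      fun h1 h2 => by omega⟩
  | @tail v z h1 hcov ih =>
    obtain ⟨⟨t, ht, rfl⟩, hlt⟩ := hcov
    intro i
    have hne := cs.length_simple_mul_ne v i
    rcases cs.length_simple_mul v i with hsv | hsv
    · -- ascent at v
      have hav : ℓ v < ℓ (cs.simple i * v) := by omega
      refine ⟨?_, ?_, ?_⟩
      · intro hdz hau
        have hQ := (ih i).2.1 hav hau
        have hC := (bruhat_crux cs ht hlt hdz hav).1
        exact hQ.trans hC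
      · intro haz hau
        have hQ := (ih i).2.1 hav hau
        have h2 : BruhatLE cs (cs.simple i * v) (cs.simple i * (v * t)) := by
          rw [← mul_assoc]
          apply bruhat_single cs ht
          rw [mul_assoc]
          omega
        exact hQ.trans h2
      · intro hdz hau
        have hC := (bruhat_crux cs ht hlt hdz hav).2
        exact Relation.ReflTransGen.trans h1 hC
    · -- descent at v
      have hdv : ℓ (cs.simple i * v) < ℓ v := by omega
      refine ⟨?_, ?_, ?_⟩
      · intro hdz hau
        have hA := (ih i).1 hdv hau
        exact hA.trans (bruhat_single cs ht hlt)
      · intro haz hau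
        have hA := (ih i).1 hdv hau
        have h2 : BruhatLE cs v (v * t) := bruhat_single cs ht hlt
        have h3 : BruhatLE cs (v * t) (cs.simple i * (v * t)) :=
          bruhat_simple_asc_left cs haz
        exact (hA.trans h2).trans h3
      · intro hdz hau
        have hZ := (ih i).2.2 hdv hau
        have hdzlen : ℓ (cs.simple i * (v * t)) = ℓ (v * t) - 1 := by
          rcases cs.length_simple_mul (v * t) i with h | h <;> omega
        have h2 : BruhatLE cs (cs.simple i * v) (cs.simple i * (v * t)) := by
          rw [← mul_assoc]
          apply bruhat_single cs ht
          rw [mul_assoc]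
          omega
        exact hZ.trans h2

end Lifting


section LiftCor

lemma bruhat_A {u z : W} (h : BruhatLE cs u z) (i : B)
    (hdz : ℓ (cs.simple i * z) < ℓ z) (hau : ℓ u < ℓ (cs.simple i * u)) :
    BruhatLE cs (cs.simple i * u) z :=
  (bruhat_AQZ cs h i).1 hdz hau

lemma bruhat_Q {u z : W} (h : BruhatLE cs u z) (i : B)
    (haz : ℓ z < ℓ (cs.simple i * z)) (hau : ℓ u < ℓ (cs.simple i * u)) :
    BruhatLE cs (cs.simple i * u) (cs.simple i * z) :=
  (bruhat_AQZ cs h i).2.1 haz hau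

lemma bruhat_Zb {u z : W} (h : BruhatLE cs u z) (i : B)
    (hdz : ℓ (cs.simple i * z) < ℓ z) (hau : ℓ u < ℓ (cs.simple i * u)) :
    BruhatLE cs u (cs.simple i * z) :=
  (bruhat_AQZ cs h i).2.2 hdz hau

lemma length_mul_simple_inv (u : W) (i : B) :
    ℓ (cs.simple i * u⁻¹) = ℓ (u * cs.simple i) := by
  have he : (u * cs.simple i)⁻¹ = cs.simple i * u⁻¹ := by
    rw [mul_inv_rev, cs.inv_simple]
  rw [← he, cs.length_inv]

lemma bruhat_Ar {u z : W} (h : BruhatLE cs u z) (i : B)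
    (hdz : ℓ (z * cs.simple i) < ℓ z) (hau : ℓ u < ℓ (u * cs.simple i)) :
    BruhatLE cs (u * cs.simple i) z := by
  have h1 := bruhat_A cs (bruhat_inv cs h) i
    (by rw [length_mul_simple_inv, cs.length_inv]; exact hdz)
    (by rw [length_mul_simple_inv, cs.length_inv]; exact hau)
  have h2 := bruhat_inv cs h1
  have he : (cs.simple i * u⁻¹)⁻¹ = u * cs.simple i := by
    rw [mul_inv_rev, cs.inv_simple, inv_inv]
  rwa [he, inv_inv] at h2

lemma bruhat_Qr {u z : W} (h : BruhatLE cs u z) (i : B)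
    (haz : ℓ z < ℓ (z * cs.simple i)) (hau : ℓ u < ℓ (u * cs.simple i)) :
    BruhatLE cs (u * cs.simple i) (z * cs.simple i) := by
  have h1 := bruhat_Q cs (bruhat_inv cs h) i
    (by rw [length_mul_simple_inv, cs.length_inv]; exact haz)
    (by rw [length_mul_simple_inv, cs.length_inv]; exact hau)
  have h2 := bruhat_inv cs h1
  have he : ∀ a : W, (cs.simple i * a⁻¹)⁻¹ = a * cs.simple i := by
    intro a
    rw [mul_inv_rev, cs.inv_simple, inv_inv]
  rwa [he, he] at h2

lemma bruhat_Zbr {u z : W} (h : BruhatLE cs u z) (i : B)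
    (hdz : ℓ (z * cs.simple i) < ℓ z) (hau : ℓ u < ℓ (u * cs.simple i)) :
    BruhatLE cs u (z * cs.simple i) := by
  have h1 := bruhat_Zb cs (bruhat_inv cs h) i
    (by rw [length_mul_simple_inv, cs.length_inv]; exact hdz)
    (by rw [length_mul_simple_inv, cs.length_inv]; exact hau)
  have h2 := bruhat_inv cs h1
  have he : (cs.simple i * z⁻¹)⁻¹ = z * cs.simple i := by
    rw [mul_inv_rev, cs.inv_simple, inv_inv]
  rwa [he, inv_inv] at h2

/-- Decomposition of an element below `w * sᵢ`. -/
lemma bruhat_decomp {a w : W} {i : B} (hasc : ℓ w < ℓ (w * cs.simple i))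
    (h : BruhatLE cs a (w * cs.simple i)) :
    BruhatLE cs a w ∨ (BruhatLE cs (a * cs.simple i) w ∧ ℓ (a * cs.simple i) < ℓ a) := by
  have hcancel : w * cs.simple i * cs.simple i = w := cs.simple_mul_simple_cancel_right i
  have hdz : ℓ (w * cs.simple i * cs.simple i) < ℓ (w * cs.simple i) := by
    rw [hcancel]; exact hasc
  have hne := cs.length_mul_simple_ne a i
  rcases Nat.lt_or_ge (ℓ a) (ℓ (a * cs.simple i)) with hau | hau
  · left
    have := bruhat_Zbr cs h i hdz hau
    rwa [hcancel] at this
  · right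
    have hd : ℓ (a * cs.simple i) < ℓ a := by omega
    refine ⟨?_, hd⟩
    have ha' : BruhatLE cs (a * cs.simple i) (w * cs.simple i) :=
      (bruhat_simple_desc cs hd).trans h
    have hau' : ℓ (a * cs.simple i) < ℓ (a * cs.simple i * cs.simple i) := by
      rw [cs.simple_mul_simple_cancel_right]; exact hd
    have := bruhat_Zbr cs ha' i hdz hau'
    rwa [hcancel] at this

end LiftCor


section Sigma

variable {σ : W → W} (hmul : ∀ u v : W, σ (u * v) = σ u * σ v)
  (hinvol : ∀ w : W, σ (σ w) = w)
  (hgen : ∀ i : B, ∃ j : B, σ (cs.simple i) = cs.simple j)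

include hmul

lemma sigma_one : σ 1 = 1 := by
  have h := hmul 1 1
  rw [one_mul] at h
  exact (left_eq_mul.mp h)

lemma sigma_inv (w : W) : σ w⁻¹ = (σ w)⁻¹ := by
  have h := hmul w⁻¹ w
  rw [inv_mul_cancel, sigma_one hmul] at h
  exact eq_inv_of_mul_eq_one_left h.symm

include hgen

lemma sigma_wordProd (ω : List B) :
    σ (π ω) = π (ω.map (fun i => Classical.choose (hgen i))) := by
  induction ω with
  | nil => simpa using sigma_one hmul
  | cons x ω ih =>
    rw [cs.wordProd_cons, hmul, ih, List.map_cons, cs.wordProd_cons]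
    congr 1
    exact Classical.choose_spec (hgen x)

include hinvol

lemma sigma_length (w : W) : ℓ (σ w) = ℓ w := by
  have key : ∀ v : W, ℓ (σ v) ≤ ℓ v := by
    intro v
    obtain ⟨ω, hlen, hv⟩ := cs.exists_reduced_word v
    rw [hv, sigma_wordProd cs hmul hgen]
    calc ℓ (π (ω.map (fun i => Classical.choose (hgen i))))
        ≤ (ω.map (fun i => Classical.choose (hgen i))).length := cs.length_wordProd_le _
      _ = ω.length := List.length_map _
      _ = ℓ (π ω) := hlen.eq.symm
  have h1 := key (σ w)
  rw [hinvol] at h1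
  exact le_antisymm (key w) h1

lemma sigma_reflection {t : W} (ht : cs.IsReflection t) : cs.IsReflection (σ t) := by
  obtain ⟨w, i, rfl⟩ := ht
  obtain ⟨j, hj⟩ := hgen i
  refine ⟨σ w, j, ?_⟩
  rw [hmul, hmul, hj, sigma_inv hmul]

lemma sigma_bruhat {u w : W} (h : BruhatLE cs u w) : BruhatLE cs (σ u) (σ w) := by
  induction h with
  | refl => exact Relation.ReflTransGen.refl
  | @tail b c h1 h2 ih =>
    obtain ⟨⟨t, ht, rfl⟩, hlt⟩ := h2
    refine ih.tail ?_
    refine ⟨⟨σ t, sigma_reflection cs hmul hinvol hgen ht, hmul b t⟩, ?_⟩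
    rw [sigma_length cs hmul hinvol hgen, sigma_length cs hmul hinvol hgen]
    exact hlt

end Sigma

section W0

variable {w₀ : W} (hw₀ : ∀ w : W, cs.length w ≤ cs.length w₀)

include hw₀

lemma w0_reflection_descent {t : W} (ht : cs.IsReflection t) : ℓ (w₀ * t) < ℓ w₀ :=
  lt_of_le_of_ne (hw₀ _) (ht.length_mul_left_ne w₀)

lemma npar_one_iff {w t : W} (ht : cs.IsReflection t) :
    npar cs w t = 1 ↔ ℓ (w * t) < ℓ w := by
  constructor
  · intro h
    by_contra hc
    have hgt : ℓ w < ℓ (w * t) := lt_of_le_of_ne (not_lt.mp hc) (Ne.symm (ht.length_mul_left_ne w))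
    have h0 : npar cs w t = 0 := by
      obtain ⟨ω, hred, hw'⟩ := cs.exists_reduced_word' w
      rw [hw', npar_eq_count]
      have hnm : t ∉ cs.rightInvSeq ω := by
        intro hmem
        have hinv := (cs.isRightInversion_of_mem_rightInvSeq hred hmem).2
        rw [← hw'] at hinv
        omega
      rw [List.count_eq_zero.mpr hnm]
      simp
    rw [h0] at h
    exact one_ne_zero h.symm
  · exact npar_eq_one_of_inversion cs ht

lemma w0_mul_length (v : W) : ℓ (w₀ * v) + ℓ v = ℓ w₀ := by
  generalize hn : ℓ v = n
  induction n using Nat.strong_induction_on generalizing v with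
  | _ n ih =>
    rcases eq_or_ne v 1 with rfl | hv
    · simp at hn
      simp [← hn]
    · obtain ⟨i, hi⟩ := cs.exists_rightDescent_of_ne_one hv
      have hne := cs.length_mul_simple_ne v i
      have hd : ℓ (v * cs.simple i) = n - 1 ∧ 1 ≤ n := by
        have h2 : cs.length (v * cs.simple i) < cs.length v := hi
        rcases cs.length_mul_simple v i with h | h <;> omega
      set v' := v * cs.simple i with hv'
      have hvv : v = v' * cs.simple i := by
        rw [hv', cs.simple_mul_simple_cancel_right]
      have ihv := ih (n-1) (by omega) v' hd.1
      -- s_i is a right descent of w₀ * v'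
      have hrefl : cs.IsReflection (v' * cs.simple i * v'⁻¹) :=
        (cs.isReflection_simple i).conj v'
      have hnpar : npar cs (w₀ * v') (cs.simple i) = 1 := by
        rw [npar_mul]
        have h1 : npar cs v' (cs.simple i) = 0 := by
          by_contra hc
          have hne2 : npar cs v' (cs.simple i) = 1 := by
            have : ∀ z : ZMod 2, z ≠ 0 → z = 1 := by decide
            exact this _ hc
          have := (npar_one_iff cs hw₀ (cs.isReflection_simple i)).mp hne2
          rw [← hvv] at this
          omega
        have h2 : npar cs w₀ (v' * cs.simple i * v'⁻¹) = 1 :=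
          npar_eq_one_of_inversion cs hrefl (w0_reflection_descent cs hw₀ hrefl)
        rw [h1, h2, zero_add]
      have hdesc : ℓ ((w₀ * v') * cs.simple i) < ℓ (w₀ * v') :=
        (npar_one_iff cs hw₀ (cs.isReflection_simple i)).mp hnpar
      have hnew : w₀ * v = (w₀ * v') * cs.simple i := by
        rw [hvv, ← mul_assoc]
      have hne3 := cs.length_mul_simple_ne (w₀ * v') i
      rcases cs.length_mul_simple (w₀ * v') i with hpm | hpm <;>
        (have h1n := hd.2; rw [hnew]; omega)

lemma w0_mul_left_length (v : W) : ℓ (v * w₀) + ℓ v = ℓ w₀ := by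
  have hw₀' : ∀ w : W, ℓ w ≤ ℓ w₀⁻¹ := by
    intro w
    rw [cs.length_inv]
    exact hw₀ w
  have h := w0_mul_length cs hw₀' v⁻¹
  have he : (v * w₀)⁻¹ = w₀⁻¹ * v⁻¹ := by rw [mul_inv_rev]
  rw [← he, cs.length_inv, cs.length_inv, cs.length_inv] at h
  exact h

lemma w0_unique {u : W} (hu : ℓ u = ℓ w₀) : u = w₀ := by
  have h := w0_mul_length cs hw₀ (w₀⁻¹ * u)
  rw [← mul_assoc, mul_inv_cancel, one_mul] at h
  have h2 : ℓ (w₀⁻¹ * u) = 0 := by omega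
  rw [cs.length_eq_zero_iff] at h2
  have : u = w₀ * (w₀⁻¹ * u) * 1 := by group
  rw [h2] at this
  simpa using this

lemma w0_inv : w₀⁻¹ = w₀ :=
  w0_unique cs hw₀ (cs.length_inv w₀)

lemma w0_sq : w₀ * w₀ = 1 := by
  nth_rw 1 [← w0_inv cs hw₀]
  rw [inv_mul_cancel]

lemma bruhat_le_w0 (w : W) : BruhatLE cs w w₀ := by
  generalize hk : ℓ w₀ - ℓ w = k
  induction k generalizing w with
  | zero =>
    have : w = w₀ := w0_unique cs hw₀ (by have := hw₀ w; omega)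
    rw [this]
    exact Relation.ReflTransGen.refl
  | succ k ihk =>
    have hlw : ℓ w < ℓ w₀ := by omega
    have hwne : w ≠ w₀ := fun hc => by rw [hc] at hlw; omega
    -- find an ascent of w
    set y := w * w₀ with hy
    have hyne : y ≠ 1 := by
      intro hc
      have : w = w₀⁻¹ := eq_inv_of_mul_eq_one_left (by rw [← hy, hc])
      rw [w0_inv cs hw₀] at this
      exact hwne this
    obtain ⟨j, hj⟩ := cs.exists_rightDescent_of_ne_one hyne
    -- s_i := w₀ s_j w₀ is simple
    have hsimple : ℓ (w₀ * cs.simple j * w₀) = 1 := by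
      have h1 : ℓ (cs.simple j * w₀) + ℓ (cs.simple j) = ℓ w₀ := by
        have := w0_mul_left_length cs hw₀ (cs.simple j)
        -- this : ℓ (s_j * w₀) + ℓ (s_j) = ℓ w₀
        exact this
      have h2 := w0_mul_length cs hw₀ (cs.simple j * w₀)
      rw [← mul_assoc] at h2
      rw [cs.length_simple] at h1
      omega
    obtain ⟨i, hi⟩ := cs.length_eq_one_iff.mp hsimple
    -- w * s_i = y * s_j * w₀ and the length goes up
    have hws : w * cs.simple i * w₀ = y * cs.simple j := by
      rw [← hi, hy]
      have hsq := w0_sq cs hw₀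
      calc w * (w₀ * cs.simple j * w₀) * w₀
          = w * w₀ * cs.simple j * (w₀ * w₀) := by group
        _ = w * w₀ * cs.simple j := by rw [hsq, mul_one]
    have hyl := w0_mul_left_length cs hw₀ w
    have hwsl := w0_mul_left_length cs hw₀ (w * cs.simple i)
    rw [hws] at hwsl
    have hjlen : ℓ (y * cs.simple j) < ℓ y := hj
    have hne := cs.length_mul_simple_ne w i
    have hasc : ℓ w < ℓ (w * cs.simple i) := by
      rw [hy] at hjlen hwsl
      omega
    have step : BruhatLE cs w (w * cs.simple i) := bruhat_simple_asc cs hasc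
    refine step.trans (ihk (w * cs.simple i) ?_)
    have hb := hw₀ (w * cs.simple i)
    rcases cs.length_mul_simple w i with hpm | hpm <;> omega

lemma bruhat_w0_reverse {u v : W} (h : BruhatLE cs u v) :
    BruhatLE cs (v * w₀) (u * w₀) := by
  induction h with
  | refl => exact Relation.ReflTransGen.refl
  | @tail b c h1 h2 ih =>
    obtain ⟨⟨t, ht, rfl⟩, hlt⟩ := h2
    refine Relation.ReflTransGen.trans ?_ ih
    have hrefl : cs.IsReflection (w₀⁻¹ * t * w₀) := by simpa using ht.conj w₀⁻¹
    have hms := ht.mul_self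
    have he : (b * t * w₀) * (w₀⁻¹ * t * w₀) = b * w₀ := by
      calc b * t * w₀ * (w₀⁻¹ * t * w₀) = b * (t * t) * w₀ := by group
        _ = b * w₀ := by rw [hms, mul_one]
    have hlen : ℓ (b * t * w₀) < ℓ (b * w₀) := by
      have h1 := w0_mul_left_length cs hw₀ (b * t)
      have h2 := w0_mul_left_length cs hw₀ b
      omega
    have hfin := bruhat_single cs hrefl (u := b * t * w₀) (by rw [he]; exact hlen)
    rwa [he] at hfin

end W0


section Twisted

variable {σ : W → W} (hmul : ∀ u v : W, σ (u * v) = σ u * σ v)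
  (hinvol : ∀ w : W, σ (σ w) = w)
  (hgen : ∀ i : B, ∃ j : B, σ (cs.simple i) = cs.simple j)

include hmul hinvol hgen

lemma sigma_simple_inv (i : B) : (σ (cs.simple i))⁻¹ = σ (cs.simple i) := by
  rw [← sigma_inv hmul, cs.inv_simple]

lemma tw_length {x : W} (hx : x⁻¹ = σ x) (i : B) :
    ℓ (σ (cs.simple i) * x) = ℓ (x * cs.simple i) := by
  have he : (σ (cs.simple i) * x)⁻¹ = σ (x * cs.simple i) := by
    rw [mul_inv_rev, sigma_simple_inv cs hmul hinvol hgen, hmul, ← hx]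
  rw [← cs.length_inv (σ (cs.simple i) * x), he, sigma_length cs hmul hinvol hgen]

lemma tw_invStep {x : W} (hx : x⁻¹ = σ x) (i : B) :
    (invStep cs σ x i)⁻¹ = σ (invStep cs σ x i) := by
  unfold invStep
  split_ifs with h1 h2
  · exact hx
  · rw [mul_inv_rev, cs.inv_simple, hmul, ← hx]
    have h3 := congrArg (fun z : W => z⁻¹) h2
    simp only [mul_inv_rev, cs.inv_simple, sigma_simple_inv cs hmul hinvol hgen] at h3
    exact h3.symm
  · rw [mul_inv_rev, mul_inv_rev, cs.inv_simple, sigma_simple_inv cs hmul hinvol hgen,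
      hmul, hmul, hinvol, ← hx]
    group

/-- The key dichotomy: on an ascent, either the twisted conjugate collapses or the
length goes up by 2. -/
lemma dic_asc {x : W} (hx : x⁻¹ = σ x) {i : B} (hasc : ℓ x < ℓ (x * cs.simple i))
    (hne : σ (cs.simple i) * x ≠ x * cs.simple i) :
    ℓ (σ (cs.simple i) * (x * cs.simple i)) = ℓ x + 2 := by
  obtain ⟨j, hj⟩ := hgen i
  have hxs : ℓ (x * cs.simple i) = ℓ x + 1 := by
    rcases cs.length_mul_simple x i with h | h <;> omega
  rcases cs.length_simple_mul (x * cs.simple i) j with h | h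
  · rw [hj, h, hxs]
  · -- contradiction via left strong exchange
    exfalso
    obtain ⟨ω, hred, hxw⟩ := cs.exists_reduced_word' x
    have hredfull : cs.IsReduced (ω ++ [i]) := by
      show ℓ (π (ω ++ [i])) = (ω ++ [i]).length
      rw [cs.wordProd_append, cs.wordProd_singleton, ← hxw]
      simp only [List.length_append, List.length_singleton]
      have : ω.length = ℓ x := by rw [hxw]; exact hred.symm
      omega
    have hπ : π (ω ++ [i]) = x * cs.simple i := by
      rw [cs.wordProd_append, cs.wordProd_singleton, ← hxw]
    have hlse : ℓ (cs.simple j * π (ω ++ [i])) < ℓ (π (ω ++ [i])) := by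
      rw [hπ]
      omega
    obtain ⟨k, hk, herase⟩ := strong_exchange_left cs hredfull (cs.isReflection_simple j) hlse
    rw [hπ] at herase
    rcases Nat.lt_or_ge k ω.length with hklt | hkge
    · rw [List.eraseIdx_append_of_lt_length hklt] at herase
      have h2 : cs.simple j * x = π (ω.eraseIdx k) := by
        have h3 := congrArg (fun z => z * cs.simple i) herase
        simp only [cs.wordProd_append, cs.wordProd_singleton] at h3
        simpa [mul_assoc, cs.simple_mul_simple_self] using h3
      have h4 : ℓ (cs.simple j * x) ≤ ω.length - 1 := by
        rw [h2]
        calc ℓ (π (ω.eraseIdx k)) ≤ (ω.eraseIdx k).length := cs.length_wordProd_le _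
          _ = ω.length - 1 := by rw [List.length_eraseIdx]; simp [hklt]
      have h5 : ℓ (cs.simple j * x) = ℓ x + 1 := by
        rw [← hj, tw_length cs hmul hinvol hgen hx]
        omega
      have h6 : ω.length = ℓ x := by rw [hxw]; exact hred.symm
      omega
    · have hkeq : k = ω.length := by
        simp only [List.length_append, List.length_singleton] at hk
        omega
      rw [hkeq, List.eraseIdx_append_of_length_le (le_refl _)] at herase
      simp only [Nat.sub_self, List.eraseIdx_cons_zero, List.append_nil] at herase
      rw [← hxw] at herase
      apply hne
      rw [hj]
      have h3 := congrArg (fun z => z * cs.simple i) herase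
      simpa [mul_assoc, cs.simple_mul_simple_self] using h3

lemma invWord_append_singleton (x : W) (l : List B) (i : B) :
    invWord cs σ x (l ++ [i]) = invStep cs σ (invWord cs σ x l) i := by
  unfold invWord
  rw [List.foldl_append]
  rfl

lemma tw_invWord {x : W} (hx : x⁻¹ = σ x) (l : List B) :
    (invWord cs σ x l)⁻¹ = σ (invWord cs σ x l) := by
  induction l generalizing x with
  | nil => exact hx
  | cons y l ih =>
    have h1 : invWord cs σ x (y :: l) = invWord cs σ (invStep cs σ x y) l := rfl
    rw [h1]
    exact ih (tw_invStep cs hmul hinvol hgen hx y)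

end Twisted


section Step

variable {σ : W → W} (hmul : ∀ u v : W, σ (u * v) = σ u * σ v)
  (hinvol : ∀ w : W, σ (σ w) = w)
  (hgen : ∀ i : B, ∃ j : B, σ (cs.simple i) = cs.simple j)

include hmul hinvol hgen

lemma invStep_up {x : W} (hx : x⁻¹ = σ x) (i : B) :
    (∀ c, BruhatLE cs c x → BruhatLE cs c (invStep cs σ x i))
  ∧ (∀ c, BruhatLE cs c x → BruhatLE cs (c * cs.simple i) (invStep cs σ x i))
  ∧ (∀ c, BruhatLE cs c x → BruhatLE cs (σ (cs.simple i) * c) (invStep cs σ x i))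
  ∧ (∀ c, BruhatLE cs c x →
      BruhatLE cs (σ (cs.simple i) * (c * cs.simple i)) (invStep cs σ x i)) := by
  obtain ⟨j, hj⟩ := hgen i
  by_cases h1 : ℓ (x * cs.simple i) < ℓ x
  · -- frozen case : y = x
    have hyx : invStep cs σ x i = x := by unfold invStep; rw [if_pos h1]
    rw [hyx]
    have hsx : ℓ (cs.simple j * x) < ℓ x := by
      rw [← hj, tw_length cs hmul hinvol hgen hx]; exact h1
    have G2 : ∀ c, BruhatLE cs c x → BruhatLE cs (c * cs.simple i) x := by
      intro c hc
      rcases Nat.lt_or_ge (ℓ c) (ℓ (c * cs.simple i)) with ha | hd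
      · exact bruhat_Ar cs hc i h1 ha
      · have hne := cs.length_mul_simple_ne c i
        exact (bruhat_simple_desc cs (by omega)).trans hc
    have G3 : ∀ c, BruhatLE cs c x → BruhatLE cs (σ (cs.simple i) * c) x := by
      intro c hc
      rw [hj]
      rcases Nat.lt_or_ge (ℓ c) (ℓ (cs.simple j * c)) with ha | hd
      · exact bruhat_A cs hc j hsx ha
      · have hne := cs.length_simple_mul_ne c j
        exact (bruhat_simple_desc_left cs (by omega)).trans hc
    refine ⟨fun c hc => hc, G2, G3, ?_⟩
    intro c hc
    rcases Nat.lt_or_ge (ℓ c) (ℓ (c * cs.simple i)) with ha | hd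
    · have h2 := G2 c hc
      rw [hj]
      rcases Nat.lt_or_ge (ℓ (c * cs.simple i)) (ℓ (cs.simple j * (c * cs.simple i)))
        with hb | hbd
      · exact bruhat_A cs h2 j hsx hb
      · have hne := cs.length_simple_mul_ne (c * cs.simple i) j
        exact (bruhat_simple_desc_left cs (by omega)).trans h2
    · have hne := cs.length_mul_simple_ne c i
      have hcs : BruhatLE cs (c * cs.simple i) x :=
        (bruhat_simple_desc cs (by omega)).trans hc
      exact G3 _ hcs
  · have hne := cs.length_mul_simple_ne x i
    have hxs : ℓ (x * cs.simple i) = ℓ x + 1 := by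
      rcases cs.length_mul_simple x i with h | h <;> omega
    have hsxl : ℓ (cs.simple j * x) = ℓ x + 1 := by
      rw [← hj, tw_length cs hmul hinvol hgen hx]; omega
    by_cases h2 : σ (cs.simple i) * x = x * cs.simple i
    · -- swap case : y = x * s
      have hyx : invStep cs σ x i = x * cs.simple i := by
        unfold invStep; rw [if_neg h1, if_pos h2]
      rw [hyx]
      have hsjx : cs.simple j * x = x * cs.simple i := by rw [← hj]; exact h2
      have hxy : BruhatLE cs x (x * cs.simple i) := bruhat_simple_asc cs (by omega)
      have hsy : cs.simple j * (x * cs.simple i) = x := by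
        rw [← mul_assoc, hsjx, cs.simple_mul_simple_cancel_right]
      have hsyd : ℓ (cs.simple j * (x * cs.simple i)) < ℓ (x * cs.simple i) := by
        rw [hsy]; omega
      have G2 : ∀ c, BruhatLE cs c x → BruhatLE cs (c * cs.simple i) (x * cs.simple i) := by
        intro c hc
        rcases Nat.lt_or_ge (ℓ c) (ℓ (c * cs.simple i)) with ha | hd
        · exact bruhat_Qr cs hc i (by omega) ha
        · have hne2 := cs.length_mul_simple_ne c i
          exact ((bruhat_simple_desc cs (by omega)).trans hc).trans hxy
      have G3 : ∀ c, BruhatLE cs c x →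
          BruhatLE cs (σ (cs.simple i) * c) (x * cs.simple i) := by
        intro c hc
        rw [hj]
        rcases Nat.lt_or_ge (ℓ c) (ℓ (cs.simple j * c)) with ha | hd
        · have := bruhat_Q cs hc j (by omega) ha
          rwa [hsjx] at this
        · have hne2 := cs.length_simple_mul_ne c j
          exact ((bruhat_simple_desc_left cs (by omega)).trans hc).trans hxy
      refine ⟨fun c hc => hc.trans hxy, G2, G3, ?_⟩
      intro c hc
      rcases Nat.lt_or_ge (ℓ c) (ℓ (c * cs.simple i)) with ha | hd
      · have h2' := G2 c hc
        rw [hj]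
        rcases Nat.lt_or_ge (ℓ (c * cs.simple i)) (ℓ (cs.simple j * (c * cs.simple i)))
          with hb | hbd
        · exact bruhat_A cs h2' j hsyd hb
        · have hne2 := cs.length_simple_mul_ne (c * cs.simple i) j
          exact (bruhat_simple_desc_left cs (by omega)).trans h2'
      · have hne2 := cs.length_mul_simple_ne c i
        have hcs : BruhatLE cs (c * cs.simple i) x :=
          (bruhat_simple_desc cs (by omega)).trans hc
        exact G3 _ hcs
    · -- generic case : y = σ s * x * s
      have hyx : invStep cs σ x i = σ (cs.simple i) * x * cs.simple i := by
        unfold invStep; rw [if_neg h1, if_neg h2]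
      rw [hyx]
      have he : σ (cs.simple i) * x * cs.simple i
          = cs.simple j * (x * cs.simple i) := by
        rw [hj, mul_assoc]
      have hC2 : ℓ (cs.simple j * (x * cs.simple i)) = ℓ x + 2 := by
        rw [← hj]
        exact dic_asc cs hmul hinvol hgen hx (by omega) h2
      have hxsy : BruhatLE cs (x * cs.simple i) (σ (cs.simple i) * x * cs.simple i) := by
        rw [he]
        exact bruhat_simple_asc_left cs (by omega)
      have heq2 : cs.simple j * x * cs.simple i = cs.simple j * (x * cs.simple i) :=
        mul_assoc _ _ _
      have hsxy : BruhatLE cs (cs.simple j * x) (σ (cs.simple i) * x * cs.simple i) := by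
        have hstep : BruhatLE cs (cs.simple j * x) (cs.simple j * x * cs.simple i) :=
          bruhat_simple_asc cs (by rw [heq2]; omega)
        rwa [heq2, ← he] at hstep
      have hxy : BruhatLE cs x (σ (cs.simple i) * x * cs.simple i) :=
        (bruhat_simple_asc cs (show ℓ x < ℓ (x * cs.simple i) by omega)).trans hxsy
      have G2 : ∀ c, BruhatLE cs c x →
          BruhatLE cs (c * cs.simple i) (σ (cs.simple i) * x * cs.simple i) := by
        intro c hc
        rcases Nat.lt_or_ge (ℓ c) (ℓ (c * cs.simple i)) with ha | hd
        · exact (bruhat_Qr cs hc i (by omega) ha).trans hxsy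
        · have hne2 := cs.length_mul_simple_ne c i
          exact ((bruhat_simple_desc cs (by omega)).trans hc).trans hxy
      have G3 : ∀ c, BruhatLE cs c x →
          BruhatLE cs (σ (cs.simple i) * c) (σ (cs.simple i) * x * cs.simple i) := by
        intro c hc
        have hres : BruhatLE cs (cs.simple j * c) (σ (cs.simple i) * x * cs.simple i) := by
          rcases Nat.lt_or_ge (ℓ c) (ℓ (cs.simple j * c)) with ha | hd
          · exact (bruhat_Q cs hc j (by omega) ha).trans hsxy
          · have hne2 := cs.length_simple_mul_ne c j
            exact ((bruhat_simple_desc_left cs (by omega)).trans hc).trans hxy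
        rwa [← hj] at hres
      refine ⟨fun c hc => hc.trans hxy, G2, G3, ?_⟩
      intro c hc
      rcases Nat.lt_or_ge (ℓ c) (ℓ (c * cs.simple i)) with ha | hd
      · have h2' : BruhatLE cs (c * cs.simple i) (x * cs.simple i) :=
          bruhat_Qr cs hc i (by omega) ha
        have hres : BruhatLE cs (cs.simple j * (c * cs.simple i))
            (σ (cs.simple i) * x * cs.simple i) := by
          rcases Nat.lt_or_ge (ℓ (c * cs.simple i)) (ℓ (cs.simple j * (c * cs.simple i)))
            with hb | hbd
          · have hQ := bruhat_Q cs h2' j (by omega) hb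
            rwa [← he] at hQ
          · have hne2 := cs.length_simple_mul_ne (c * cs.simple i) j
            exact (bruhat_simple_desc_left cs (by omega)).trans (h2'.trans hxsy)
        rwa [← hj] at hres
      · have hne2 := cs.length_mul_simple_ne c i
        have hcs : BruhatLE cs (c * cs.simple i) x :=
          (bruhat_simple_desc cs (by omega)).trans hc
        exact G3 _ hcs

end Step


section Master

variable {σ : W → W} (hmul : ∀ u v : W, σ (u * v) = σ u * σ v)
  (hinvol : ∀ w : W, σ (σ w) = w)
  (hgen : ∀ i : B, ∃ j : B, σ (cs.simple i) = cs.simple j)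

include hmul hinvol hgen

lemma master {x : W} (hx : x⁻¹ = σ x) {l : List B} (hl : cs.IsReduced l) :
    (∃ a b : W, BruhatLE cs a (π l) ∧ BruhatLE cs b (π l) ∧
      invWord cs σ x l = (σ a)⁻¹ * x * b)
  ∧ (∀ a b : W, BruhatLE cs a (π l) → BruhatLE cs b (π l) →
      BruhatLE cs ((σ a)⁻¹ * x * b) (invWord cs σ x l)) := by
  induction l using List.reverseRecOn with
  | nil =>
    constructor
    · refine ⟨1, 1, Relation.ReflTransGen.refl, Relation.ReflTransGen.refl, ?_⟩
      rw [sigma_one hmul]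
      simp [invWord]
    · intro a b ha hb
      have hπ0 : ℓ (π ([] : List B)) = 0 := by simp
      have ha1 : a = 1 := by
        have h := bruhat_length_le cs ha
        rw [hπ0] at h
        exact cs.length_eq_zero_iff.mp (by omega)
      have hb1 : b = 1 := by
        have h := bruhat_length_le cs hb
        rw [hπ0] at h
        exact cs.length_eq_zero_iff.mp (by omega)
      subst ha1; subst hb1
      rw [sigma_one hmul]
      show BruhatLE cs (1⁻¹ * x * 1) x
      simp only [inv_one, one_mul, mul_one]
      exact Relation.ReflTransGen.refl
  | append_singleton l i ih =>
    have hl' : cs.IsReduced l := by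
      have h := hl.take l.length
      rwa [List.take_left] at h
    have hπ : π (l ++ [i]) = π l * cs.simple i := by
      rw [cs.wordProd_append, cs.wordProd_singleton]
    have hasc : ℓ (π l) < ℓ (π l * cs.simple i) := by
      have h1 : ℓ (π l) = l.length := hl'
      have h2 : ℓ (π (l ++ [i])) = l.length + 1 := by
        rw [hl]
        simp
      rw [← hπ, h1, h2]
      omega
    have ihx := ih hl'
    set y₀ := invWord cs σ x l with hy₀
    have hy₀tw : y₀⁻¹ = σ y₀ := tw_invWord cs hmul hinvol hgen hx l
    have hstep := invStep_up cs hmul hinvol hgen hy₀tw i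
    have hrw : invWord cs σ x (l ++ [i]) = invStep cs σ y₀ i :=
      invWord_append_singleton cs hmul hinvol hgen x l i
    rw [hrw]
    constructor
    · -- existence of witnesses
      obtain ⟨a, b, ha, hb, heq⟩ := ihx.1
      have haup : BruhatLE cs a (π (l ++ [i])) := by
        rw [hπ]
        exact ha.trans (bruhat_simple_asc cs hasc)
      have hbs : BruhatLE cs (b * cs.simple i) (π (l ++ [i])) := by
        rw [hπ]
        rcases Nat.lt_or_ge (ℓ b) (ℓ (b * cs.simple i)) with h | h
        · exact bruhat_Qr cs hb i hasc h
        · have hne := cs.length_mul_simple_ne b i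
          exact ((bruhat_simple_desc cs (by omega)).trans hb).trans
            (bruhat_simple_asc cs hasc)
      have hbup : BruhatLE cs b (π (l ++ [i])) := by
        rw [hπ]
        exact hb.trans (bruhat_simple_asc cs hasc)
      have hasup : BruhatLE cs (a * cs.simple i) (π (l ++ [i])) := by
        rw [hπ]
        rcases Nat.lt_or_ge (ℓ a) (ℓ (a * cs.simple i)) with h | h
        · exact bruhat_Qr cs ha i hasc h
        · have hne := cs.length_mul_simple_ne a i
          exact ((bruhat_simple_desc cs (by omega)).trans ha).trans
            (bruhat_simple_asc cs hasc)
      by_cases h1 : ℓ (y₀ * cs.simple i) < ℓ y₀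
      · have hyx : invStep cs σ y₀ i = y₀ := by unfold invStep; rw [if_pos h1]
        exact ⟨a, b, haup, hbup, by rw [hyx, heq]⟩
      · by_cases h2 : σ (cs.simple i) * y₀ = y₀ * cs.simple i
        · have hyx : invStep cs σ y₀ i = y₀ * cs.simple i := by
            unfold invStep; rw [if_neg h1, if_pos h2]
          refine ⟨a, b * cs.simple i, haup, hbs, ?_⟩
          rw [hyx, heq, mul_assoc]
        · have hyx : invStep cs σ y₀ i = σ (cs.simple i) * y₀ * cs.simple i := by
            unfold invStep; rw [if_neg h1, if_neg h2]
          refine ⟨a * cs.simple i, b * cs.simple i, hasup, hbs, ?_⟩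
          rw [hyx, heq, hmul, mul_inv_rev, sigma_simple_inv cs hmul hinvol hgen]
          simp only [mul_assoc]
    · -- upper bound property
      intro a b ha hb
      rw [hπ] at ha hb
      have hda := bruhat_decomp cs hasc ha
      have hdb := bruhat_decomp cs hasc hb
      rcases hda with ha' | ⟨ha', hda2⟩ <;> rcases hdb with hb' | ⟨hb', hdb2⟩
      · exact hstep.1 _ (ihx.2 a b ha' hb')
      · have hc := ihx.2 a (b * cs.simple i) ha' hb'
        have hexpr : (σ a)⁻¹ * x * b
            = ((σ a)⁻¹ * x * (b * cs.simple i)) * cs.simple i := by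
          simp only [mul_assoc, cs.simple_mul_simple_cancel_right,
            cs.simple_mul_simple_self, mul_one]
        rw [hexpr]
        exact hstep.2.1 _ hc
      · have hc := ihx.2 (a * cs.simple i) b ha' hb'
        obtain ⟨j, hj⟩ := hgen i
        have hexpr : (σ a)⁻¹ * x * b
            = σ (cs.simple i) * ((σ (a * cs.simple i))⁻¹ * x * b) := by
          rw [hmul, hj, mul_inv_rev, cs.inv_simple]
          simp only [mul_assoc, cs.simple_mul_simple_cancel_left]
        rw [hexpr]
        exact hstep.2.2.1 _ hc
      · have hc := ihx.2 (a * cs.simple i) (b * cs.simple i) ha' hb'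
        obtain ⟨j, hj⟩ := hgen i
        have hexpr : (σ a)⁻¹ * x * b
            = σ (cs.simple i) *
              (((σ (a * cs.simple i))⁻¹ * x * (b * cs.simple i)) * cs.simple i) := by
          rw [hmul, hj, mul_inv_rev, cs.inv_simple]
          simp only [mul_assoc, cs.simple_mul_simple_cancel_left,
            cs.simple_mul_simple_self, mul_one]
        rw [hexpr]
        exact hstep.2.2.2 _ hc

end Master

end HeckeAux

/-- If `W` is finite with longest element `w₀`, then the Hecke atoms of `w₀`
are precisely the elements `w` with `w* w₀ ≤ w` in Bruhat order:
`B_*(1, w₀) = {w ∈ W : w* w₀ ≤ w}`. -/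
theorem heckeAtoms_longest_element
    (cs : CoxeterSystem M W) [Finite W] (σ : W → W)
    (hmul : ∀ u v : W, σ (u * v) = σ u * σ v)
    (hinvol : ∀ w : W, σ (σ w) = w)
    (hgen : ∀ i : B, ∃ j : B, σ (cs.simple i) = cs.simple j)
    (w₀ : W) (hw₀ : ∀ w : W, cs.length w ≤ cs.length w₀) :
    HeckeAtoms cs σ 1 w₀ = {w : W | BruhatLE cs (σ w * w₀) w} := by
  have h1 : (1 : W)⁻¹ = σ 1 := by rw [inv_one, HeckeAux.sigma_one hmul]
  ext w
  simp only [HeckeAtoms, Set.mem_setOf_eq]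
  constructor
  · rintro ⟨l, hπl, hred, hinv⟩
    obtain ⟨a, b, ha, hb, heq⟩ := (HeckeAux.master cs hmul hinvol hgen h1 hred).1
    rw [hπl] at ha hb
    have heq2 : w₀ = (σ a)⁻¹ * 1 * b := by rw [← hinv]; exact heq
    have hb2 : b = σ a * w₀ := by rw [heq2]; group
    have hσ := HeckeAux.sigma_bruhat cs hmul hinvol hgen ha
    have hmono : BruhatLE cs (σ w * w₀) (σ a * w₀) :=
      HeckeAux.bruhat_w0_reverse cs hw₀ hσ
    rw [← hb2] at hmono
    exact hmono.trans hb
  · intro h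
    obtain ⟨l, hred, hw⟩ := cs.exists_reduced_word' w
    refine ⟨l, hw.symm, hred, ?_⟩
    have hup := (HeckeAux.master cs hmul hinvol hgen h1 hred).2 w (σ w * w₀)
      (by rw [← hw]; exact Relation.ReflTransGen.refl) (by rw [← hw]; exact h)
    have hval : (σ w)⁻¹ * 1 * (σ w * w₀) = w₀ := by group
    rw [hval] at hup
    have hdown := HeckeAux.bruhat_le_w0 cs hw₀ (invWord cs σ 1 l)
    exact HeckeAux.bruhat_eq_of_length_ge cs hdown (HeckeAux.bruhat_length_le cs hup)
end
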